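/- arXiv:1402.5430 — 10 statements merged into one kernel-verified Lean document; each statement's English description precedes it below -/
import Mathlib

section
/- Let f(X) = a_0 X^n + a_1 X^{n-1} + ... + a_{n-1} X + a_n ∈ ℤ[X] with n ≥ 2, a_0 ≠ 0 and a_{n-1} ≠ 0, and let η ≠ 1 be a complex number. Then f(X) ≠ f(ηX), and for fixed a_0, ..., a_{n-1}, the resultant Res(f(X), f(ηX)), viewed as a polynomial in the variable a_n, is not identically zero and has degree at most n in a_n. -/
open Polynomial Finset

/-- The resultant of two complex polynomials (Poisson product formula, which agrees with
the Sylvester-matrix resultant over `ℂ`):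
`Res(g, h) = lc(g)^{deg h} · ∏_{g(α)=0} h(α)`. -/
noncomputable def res (g h : Polynomial ℂ) : ℂ :=
  g.leadingCoeff ^ h.natDegree * (g.roots.map fun α => h.eval α).prod

/-- For `f(X) = a₀Xⁿ + ⋯ + a_{n-1}X + aₙ ∈ ℤ[X]` with `n ≥ 2`, `a₀ ≠ 0`, `a_{n-1} ≠ 0`,
and `η ≠ 1` a complex number: `f(X) ≠ f(ηX)`, and for fixed `a₀, …, a_{n-1}` the resultant
`Res(f(X), f(ηX))`, as a function of `aₙ`, is given by a nonzero polynomial of degree at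
most `n`. -/
theorem resultant_nonzero_poly_in_const_coeff (n : ℕ) (hn : 2 ≤ n) (a : ℕ → ℤ)
    (ha0 : a 0 ≠ 0) (han1 : a (n - 1) ≠ 0) (η : ℂ) (hη : η ≠ 1)
    (F : ℤ → Polynomial ℂ)
    (hF : ∀ t : ℤ, F t = (∑ j ∈ Finset.range n, C ((a j : ℂ)) * X ^ (n - j)) + C (t : ℂ)) :
    (∀ t : ℤ, F t ≠ (F t).comp (C η * X)) ∧
    ∃ P : Polynomial ℂ, P ≠ 0 ∧ P.natDegree ≤ n ∧
      ∀ t : ℤ, res (F t) ((F t).comp (C η * X)) = P.eval (t : ℂ) := by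
  have hn0 : 0 < n := by omega
  have ha0' : (a 0 : ℂ) ≠ 0 := Int.cast_ne_zero.mpr ha0
  have han1' : (a (n - 1) : ℂ) ≠ 0 := Int.cast_ne_zero.mpr han1
  -- generic coefficient computations for sums of the shape `∑ C (c j) * X ^ (n - j)`
  have hcoeff : ∀ (c : ℕ → ℂ) (m : ℕ),
      (∑ j ∈ Finset.range n, C (c j) * X ^ (n - j)).coeff m
        = ∑ j ∈ Finset.range n, if n - j = m then c j else 0 := by
    intro c m
    rw [finset_sum_coeff]
    refine Finset.sum_congr rfl fun j _ => ?_
    rw [coeff_C_mul, coeff_X_pow]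
    by_cases h : n - j = m
    · rw [if_pos h.symm, if_pos h, mul_one]
    · rw [if_neg (fun hh => h hh.symm), if_neg h, mul_zero]
  have hcoeff1 : ∀ c : ℕ → ℂ,
      (∑ j ∈ Finset.range n, C (c j) * X ^ (n - j)).coeff 1 = c (n - 1) := by
    intro c
    rw [hcoeff, Finset.sum_eq_single (n - 1)]
    · rw [if_pos (show n - (n - 1) = 1 by omega)]
    · intro j hj hne
      rw [if_neg (by simp only [Finset.mem_range] at hj; omega)]
    · intro h
      exact absurd (Finset.mem_range.mpr (by omega)) h
  have hcoeffn : ∀ c : ℕ → ℂ,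
      (∑ j ∈ Finset.range n, C (c j) * X ^ (n - j)).coeff n = c 0 := by
    intro c
    rw [hcoeff, Finset.sum_eq_single 0]
    · rw [if_pos (show n - 0 = n by omega)]
    · intro j hj hne
      rw [if_neg (by simp only [Finset.mem_range] at hj; omega)]
    · intro h
      exact absurd (Finset.mem_range.mpr (by omega)) h
  have hdegle : ∀ c : ℕ → ℂ,
      (∑ j ∈ Finset.range n, C (c j) * X ^ (n - j)).natDegree ≤ n :=
    fun c => natDegree_sum_le_of_forall_le _ _ fun j _ =>
      le_trans (natDegree_C_mul_X_pow_le _ _) (Nat.sub_le n j)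
  set g : Polynomial ℂ := ∑ j ∈ Finset.range n, C ((a j : ℂ)) * X ^ (n - j) with hgdef
  have hgn : g.coeff n = (a 0 : ℂ) := hcoeffn _
  have hg1 : g.coeff 1 = (a (n - 1) : ℂ) := hcoeff1 _
  have hgdeg : g.natDegree = n :=
    le_antisymm (hdegle _) (le_natDegree_of_ne_zero (by rw [hgn]; exact ha0'))
  have hFdeg : ∀ t : ℤ, (F t).natDegree = n := by
    intro t; rw [hF t, natDegree_add_C, hgdeg]
  have hFlc : ∀ t : ℤ, (F t).leadingCoeff = (a 0 : ℂ) := by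
    intro t
    rw [Polynomial.leadingCoeff, hFdeg t, hF t, coeff_add, coeff_C,
      if_neg (show ¬ n = 0 by omega), add_zero, hgn]
  have hF0 : ∀ t : ℤ, F t ≠ 0 := by
    intro t h
    exact ha0' (by rw [← hFlc t, h, leadingCoeff_zero])
  -- the composed polynomial
  have hcompF : ∀ t : ℤ, (F t).comp (C η * X)
      = (∑ j ∈ Finset.range n, C ((a j : ℂ) * η ^ (n - j)) * X ^ (n - j)) + C (t : ℂ) := by
    intro t
    rw [hF t, add_comp, C_comp, hgdef]
    congr 1
    simp only [Polynomial.comp, eval₂_finset_sum, eval₂_mul, eval₂_C, eval₂_X_pow]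
    refine Finset.sum_congr rfl fun j _ => ?_
    rw [mul_pow, ← C_pow, ← mul_assoc, ← C_mul]
  -- Part 1
  have part1 : ∀ t : ℤ, F t ≠ (F t).comp (C η * X) := by
    intro t heq
    have hc1 : (F t).coeff 1 = (a (n - 1) : ℂ) := by
      rw [hF t, coeff_add, coeff_C, if_neg one_ne_zero, add_zero, hg1]
    have hc2 : ((F t).comp (C η * X)).coeff 1 = (a (n - 1) : ℂ) * η := by
      rw [hcompF t, coeff_add, coeff_C, if_neg one_ne_zero, add_zero, hcoeff1,
        show n - (n - 1) = 1 by omega, pow_one]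
    rw [heq, hc2] at hc1
    exact hη (mul_left_cancel₀ han1' (by rw [mul_one, hc1])).symm
  refine ⟨part1, ?_⟩
  -- the auxiliary polynomial q with q(α) = f(ηα) for any root α of f
  set q : Polynomial ℂ :=
    ∑ j ∈ Finset.range n, C ((a j : ℂ) * (η ^ (n - j) - 1)) * X ^ (n - j) with hqdef
  have hq1 : q.coeff 1 = (a (n - 1) : ℂ) * (η - 1) := by
    rw [hqdef, hcoeff1, show n - (n - 1) = 1 by omega, pow_one]
  have hq0 : q ≠ 0 := by
    intro h
    have h2 : q.coeff 1 = 0 := by rw [h]; simp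
    rw [hq1] at h2
    exact (mul_ne_zero han1' (sub_ne_zero.mpr hη)) h2
  have hqdegle : q.natDegree ≤ n := hdegle _
  have hqeval : ∀ x : ℂ, q.eval x = g.eval (η * x) - g.eval x := by
    intro x
    rw [hqdef, hgdef]
    simp only [eval_finset_sum, eval_mul, eval_C, eval_pow, eval_X]
    rw [← Finset.sum_sub_distrib]
    exact Finset.sum_congr rfl fun j _ => by ring
  have hhq : ∀ (t : ℤ) (α : ℂ), (F t).eval α = 0 →
      ((F t).comp (C η * X)).eval α = q.eval α := by
    intro t α hα
    rw [eval_comp, eval_mul, eval_C, eval_X, hqeval]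
    rw [hF t] at hα ⊢
    simp only [eval_add, eval_C] at hα ⊢
    linear_combination hα
  -- splitting facts
  have hsplits : ∀ p : Polynomial ℂ, Splits p := fun p =>
    IsAlgClosed.splits p
  have hRcard : ∀ t : ℤ, Multiset.card ((F t).roots) = n := by
    intro t; rw [splits_iff_card_roots.mp (hsplits _), hFdeg]
  have hBcard : Multiset.card q.roots = q.natDegree := splits_iff_card_roots.mp (hsplits q)
  have hFeval : ∀ (t : ℤ) (b : ℂ),
      (F t).eval b = (a 0 : ℂ) * ((F t).roots.map fun r => b - r).prod := by
    intro t b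
    conv_lhs => rw [show F t = C (F t).leadingCoeff * ((F t).roots.map fun r => X - C r).prod
      from (hsplits _).eq_prod_roots]
    rw [hFlc t, eval_mul, eval_C, eval_multiset_prod, Multiset.map_map]
    simp [Function.comp]
  have hqevalroots : ∀ x : ℂ,
      q.eval x = q.leadingCoeff * (q.roots.map fun r => x - r).prod := by
    intro x
    conv_lhs => rw [show q = C q.leadingCoeff * (q.roots.map fun r => X - C r).prod
      from (hsplits _).eq_prod_roots]
    rw [eval_mul, eval_C, eval_multiset_prod, Multiset.map_map]
    simp [Function.comp]
  -- the degree of the composed polynomial is independent of t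
  have hd : ∃ d : ℕ, ∀ t : ℤ, ((F t).comp (C η * X)).natDegree = d := by
    by_cases hη0 : η = 0
    · refine ⟨0, fun t => ?_⟩
      have hg0eval : g.eval 0 = 0 := by
        rw [hgdef]
        simp only [eval_finset_sum, eval_mul, eval_C, eval_pow, eval_X]
        refine Finset.sum_eq_zero fun j hj => ?_
        rw [zero_pow (show n - j ≠ 0 by simp only [Finset.mem_range] at hj; omega), mul_zero]
      rw [hη0, map_zero, zero_mul, comp_zero, hF t]
      simp [hg0eval]
    · refine ⟨n, fun t => ?_⟩
      rw [hcompF t, natDegree_add_C]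
      refine le_antisymm (hdegle _) (le_natDegree_of_ne_zero ?_)
      rw [hcoeffn]
      exact mul_ne_zero ha0' (pow_ne_zero _ hη0)
  obtain ⟨d, hd⟩ := hd
  -- the polynomial P
  set L : ℂ := q.leadingCoeff with hLdef
  have hL0 : L ≠ 0 := leadingCoeff_ne_zero.mpr hq0
  set k : ℕ := q.natDegree with hkdef
  set K : ℂ := (a 0 : ℂ) ^ d * L ^ n * ((-1) ^ n / (a 0 : ℂ)) ^ k with hKdef
  have hK0 : K ≠ 0 :=
    mul_ne_zero (mul_ne_zero (pow_ne_zero _ ha0') (pow_ne_zero _ hL0))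
      (pow_ne_zero _ (div_ne_zero (pow_ne_zero _ (by norm_num)) ha0'))
  set P : Polynomial ℂ := C K * (q.roots.map fun b => X + C (g.eval b)).prod with hPdef
  have hmon : ((q.roots.map fun b => X + C (g.eval b)).prod).Monic :=
    monic_multiset_prod_of_monic _ _ fun b _ => monic_X_add_C _
  refine ⟨P, ?_, ?_, ?_⟩
  · exact mul_ne_zero (fun h => hK0 (by simpa using (C_eq_zero.mp h))) hmon.ne_zero
  · rw [hPdef, natDegree_C_mul hK0,
      natDegree_multiset_prod_of_monic _ (fun f hf => by
        obtain ⟨b, _, rfl⟩ := Multiset.mem_map.mp hf; exact monic_X_add_C _),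
      Multiset.map_map]
    have h1 : ∀ b ∈ q.roots,
        (Polynomial.natDegree ∘ fun b => X + C (g.eval b)) b = (fun _ => (1 : ℕ)) b :=
      fun b _ => natDegree_X_add_C _
    rw [Multiset.map_congr rfl h1, Multiset.map_const', Multiset.sum_replicate,
      smul_eq_mul, mul_one, hBcard]
    exact hqdegle
  · intro t
    have e1 : Multiset.map (fun α => eval α ((F t).comp (C η * X))) (F t).roots
        = Multiset.map (fun α => eval α q) (F t).roots :=
      Multiset.map_congr rfl fun α hα => hhq t α (isRoot_of_mem_roots hα)
    have e2 : (Multiset.map (fun α => eval α q) (F t).roots).prod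
        = L ^ n * (Multiset.map
            (fun r => (Multiset.map (fun α => α - r) (F t).roots).prod) q.roots).prod := by
      rw [Multiset.map_congr rfl (fun α _ => hqevalroots α), Multiset.prod_map_mul,
        Multiset.map_const', Multiset.prod_replicate, hRcard t, Multiset.prod_map_prod_map]
    have e3 : ∀ r : ℂ, (Multiset.map (fun α => α - r) (F t).roots).prod
        = (-1) ^ n / (a 0 : ℂ) * (g.eval r + (t : ℂ)) := by
      intro r
      have em : Multiset.map (fun α => α - r) (F t).roots
          = Multiset.map (fun x => -x) (Multiset.map (fun α => r - α) (F t).roots) := by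
        rw [Multiset.map_map]
        exact Multiset.map_congr rfl fun α _ => by simp
      have hev : (a 0 : ℂ) * (Multiset.map (fun α => r - α) (F t).roots).prod
          = g.eval r + (t : ℂ) := by
        rw [← hFeval t r, hF t]; simp
      rw [em, Multiset.prod_map_neg, Multiset.card_map, hRcard t, ← hev]
      field_simp
    have e4 : (Multiset.map
          (fun r => (Multiset.map (fun α => α - r) (F t).roots).prod) q.roots).prod
        = ((-1) ^ n / (a 0 : ℂ)) ^ k
            * (Multiset.map (fun r => g.eval r + (t : ℂ)) q.roots).prod := by
      rw [Multiset.map_congr rfl fun r _ => e3 r, Multiset.prod_map_mul,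
        Multiset.map_const', Multiset.prod_replicate, hBcard]
    have e5 : P.eval (t : ℂ)
        = K * (Multiset.map (fun r => g.eval r + (t : ℂ)) q.roots).prod := by
      rw [hPdef, eval_mul, eval_C, eval_multiset_prod, Multiset.map_map]
      congr 1
      exact congrArg Multiset.prod (Multiset.map_congr rfl fun b _ => by
        simp [Function.comp, add_comm])
    simp only [res]
    rw [hFlc t, hd t, e1, e2, e4, e5, hKdef]
    ring
end

section
/- For every integer H ≥ 1, the number of reducible monic degenerate polynomials X^2 + a_1 X + a_2 ∈ ℤ[X] with |a_1|, |a_2| ≤ H equals ⌊√H⌋. -/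
open Polynomial Finset
open scoped Classical

/-- A polynomial `f ∈ ℤ[X]` is degenerate if it has two distinct complex roots whose
quotient is a root of unity. -/
def IsDegenerate (f : Polynomial ℤ) : Prop :=
  ∃ α β : ℂ, (Polynomial.aeval α f = 0) ∧ (Polynomial.aeval β f = 0) ∧ α ≠ β ∧
    ∃ k : ℕ, 0 < k ∧ (α / β) ^ k = 1

lemma aux_monic (a b : ℤ) : (X ^ 2 + C a * X + C b : Polynomial ℤ).Monic := by
  have h : (X ^ 2 + C a * X + C b : Polynomial ℤ) = X ^ 2 + (C a * X + C b) := by ring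
  rw [h]
  exact monic_X_pow_add (degree_linear_le.trans_lt (by norm_num))

lemma aux_aeval (a b : ℤ) (x : ℂ) :
    Polynomial.aeval x (X ^ 2 + C a * X + C b : Polynomial ℤ) = x ^ 2 + a * x + b := by
  simp [aeval_C, algebraMap_int_eq, eq_intCast]

lemma aux_key (a b : ℤ) :
    (¬ Irreducible ((X ^ 2 + C a * X + C b : Polynomial ℤ).map (Int.castRingHom ℚ)) ∧
      IsDegenerate (X ^ 2 + C a * X + C b)) ↔ (a = 0 ∧ ∃ r : ℤ, 0 < r ∧ b = -r ^ 2) := by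
  have hm := aux_monic a b
  have hdeg : (X ^ 2 + C a * X + C b : Polynomial ℤ).natDegree = 2 := by
    have h1 : (X ^ 2 + C a * X + C b : Polynomial ℤ) = C 1 * X ^ 2 + C a * X + C b := by
      rw [map_one, one_mul]
    rw [h1, natDegree_quadratic one_ne_zero]
  have hgauss : Irreducible ((X ^ 2 + C a * X + C b : Polynomial ℤ).map (Int.castRingHom ℚ)) ↔
      Irreducible (X ^ 2 + C a * X + C b : Polynomial ℤ) := by
    rw [hm.irreducible_iff_irreducible_map_fraction_map (K := ℚ), algebraMap_int_eq]
  have hc0 : (X ^ 2 + C a * X + C b : Polynomial ℤ).coeff 0 = b := by simp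
  have hc1 : (X ^ 2 + C a * X + C b : Polynomial ℤ).coeff 1 = a := by
    rw [coeff_add, coeff_add, coeff_X_pow, coeff_C_mul, coeff_X_one, coeff_C]
    norm_num
  constructor
  · rintro ⟨hirr, α, β, hα, hβ, hne, k, hk, hroot⟩
    rw [hgauss, hm.not_irreducible_iff_exists_add_mul_eq_coeff hdeg] at hirr
    obtain ⟨c₁, c₂, h1, h2⟩ := hirr
    rw [hc0] at h1; rw [hc1] at h2
    have hfac : ∀ x : ℂ, (Polynomial.aeval x (X ^ 2 + C a * X + C b : Polynomial ℤ)) =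
        (x + c₁) * (x + c₂) := by
      intro x
      rw [aux_aeval, h1, h2]
      push_cast
      ring
    have hβ0 : β ≠ 0 := by
      rintro rfl
      simp [div_zero, zero_pow hk.ne'] at hroot
    have habs : ‖α‖ = ‖β‖ := by
      have hd1 : ‖α / β‖ ^ k = 1 := by
        rw [← norm_pow, hroot, norm_one]
      have hd : ‖α / β‖ = 1 := by
        rcases lt_trichotomy (‖α / β‖) 1 with h | h | h
        · exact absurd hd1 (by have := pow_lt_one₀ (norm_nonneg _) h hk.ne'; linarith)
        · exact h
        · exact absurd hd1 (by have := one_lt_pow₀ h hk.ne'; linarith)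
      rw [norm_div, div_eq_one_iff_eq (by simpa using hβ0)] at hd
      exact hd
    rw [hfac] at hα hβ
    have hαv : α = -c₁ ∨ α = -c₂ := by
      rcases mul_eq_zero.mp hα with h | h
      · left; linear_combination h
      · right; linear_combination h
    have hβv : β = -c₁ ∨ β = -c₂ := by
      rcases mul_eq_zero.mp hβ with h | h
      · left; linear_combination h
      · right; linear_combination h
    have habs' : |c₁| = |c₂| := by
      have h3 : ‖(c₁ : ℂ)‖ = ‖(c₂ : ℂ)‖ := by
        rcases hαv with rfl | rfl <;> rcases hβv with rfl | rfl <;>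
          simp_all [map_neg_eq_map]
      rwa [Complex.norm_intCast, Complex.norm_intCast, ← Int.cast_abs, ← Int.cast_abs,
        Int.cast_injective.eq_iff] at h3
    have hc12 : c₁ ≠ c₂ := by
      rintro rfl
      rcases hαv with rfl | rfl <;> rcases hβv with rfl | rfl <;> exact hne rfl
    have hc2 : c₂ = -c₁ := by
      rcases abs_eq_abs.mp habs' with h | h <;> omega
    have hc1ne : c₁ ≠ 0 := by rintro rfl; simp [hc2] at hc12
    refine ⟨by omega, |c₁|, abs_pos.mpr hc1ne, by rw [sq_abs, h1, hc2]; ring⟩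
  · rintro ⟨rfl, r, hr, rfl⟩
    have hrC : (r : ℂ) ≠ 0 := by exact_mod_cast hr.ne'
    refine ⟨?_, (r : ℂ), (-r : ℂ), ?_, ?_, ?_, 2, two_pos, ?_⟩
    · rw [hgauss, hm.not_irreducible_iff_exists_add_mul_eq_coeff hdeg]
      exact ⟨r, -r, by rw [hc0]; ring, by rw [hc1]; ring⟩
    · rw [aux_aeval]; push_cast; ring
    · rw [aux_aeval]; push_cast; ring
    · intro h
      apply hrC
      have h2 : (2 : ℂ) * r = 0 := by linear_combination h
      simpa using h2
    · field_simp


/-- The number of reducible monic degenerate quadratics `X² + a₁X + a₂ ∈ ℤ[X]` with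
`|a₁|, |a₂| ≤ H` equals `⌊√H⌋`. -/
theorem count_reducible_degenerate_quadratic (H : ℕ) (hH : 1 ≤ H) :
    ((Finset.Icc (-(H : ℤ)) H ×ˢ Finset.Icc (-(H : ℤ)) H).filter fun p =>
      ¬ Irreducible ((X ^ 2 + C p.1 * X + C p.2 : Polynomial ℤ).map (Int.castRingHom ℚ)) ∧
      IsDegenerate (X ^ 2 + C p.1 * X + C p.2)).card = Nat.sqrt H := by
  have hset : ((Finset.Icc (-(H : ℤ)) H ×ˢ Finset.Icc (-(H : ℤ)) H).filter fun p =>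
      ¬ Irreducible ((X ^ 2 + C p.1 * X + C p.2 : Polynomial ℤ).map (Int.castRingHom ℚ)) ∧
      IsDegenerate (X ^ 2 + C p.1 * X + C p.2)) =
      (Finset.Icc (1 : ℤ) (Nat.sqrt H : ℤ)).image (fun r => ((0 : ℤ), -r ^ 2)) := by
    ext ⟨a, b⟩
    simp only [Finset.mem_filter, Finset.mem_product, Finset.mem_image, Finset.mem_Icc,
      aux_key, Prod.mk.injEq]
    constructor
    · rintro ⟨⟨-, hb⟩, rfl, r, hr, rfl⟩
      refine ⟨r, ⟨hr, ?_⟩, rfl, rfl⟩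
      have hr2 : r * r ≤ (H : ℤ) := by nlinarith [hb.1]
      have hm : r.toNat * r.toNat ≤ H := by
        have : (r.toNat : ℤ) = r := Int.toNat_of_nonneg hr.le
        zify; rw [this]; exact hr2
      have := Nat.le_sqrt.mpr hm
      omega
    · rintro ⟨r, ⟨hr1, hr2⟩, rfl, rfl⟩
      have hs : (Nat.sqrt H : ℤ) * Nat.sqrt H ≤ H := by
        exact_mod_cast Nat.sqrt_le H
      refine ⟨⟨⟨by omega, by omega⟩, by nlinarith, by nlinarith⟩, rfl, r, hr1, rfl⟩
  rw [hset, Finset.card_image_of_injOn, Int.card_Icc]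
  · omega
  · intro r hr s hs h
    simp only [Finset.coe_Icc, Set.mem_Icc] at hr hs
    have h2 : r ^ 2 = s ^ 2 := by
      have := congrArg Prod.snd h
      simpa using this
    exact le_antisymm (by nlinarith [hr.1, hs.1]) (by nlinarith [hr.1, hs.1])
end

section
/- Let f ∈ ℤ[X] be irreducible of degree n ≥ 2. Define two roots α, β of f to be equivalent if α/β is a root of unity. Then all equivalence classes of roots of f have the same cardinality ℓ, and n = s·ℓ where s is the number of equivalence classes. In particular, if f is degenerate (i.e., ℓ ≥ 2), then ℓ divides n. -/
open Polynomial

section aux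
variable {F K : Type*} [Field F] [Field K]

def urel (x y : F) : Prop := ∃ k : ℕ, 0 < k ∧ (x / y) ^ k = 1

lemma urel_refl {x : F} (hx : x ≠ 0) : urel x x := ⟨1, one_pos, by simp [div_self hx]⟩

lemma urel_symm {x y : F} (h : urel x y) : urel y x := by
  obtain ⟨k, hk, h⟩ := h
  exact ⟨k, hk, by rw [← inv_div, inv_pow, h, inv_one]⟩

lemma urel_trans {x y z : F} (hy : y ≠ 0) (h1 : urel x y) (h2 : urel y z) : urel x z := by
  obtain ⟨k, hk, h1⟩ := h1
  obtain ⟨l, hl, h2⟩ := h2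
  refine ⟨k * l, Nat.mul_pos hk hl, ?_⟩
  have hxz : x / z = (x / y) * (y / z) := by rw [div_mul_div_comm, mul_comm x y,
    mul_div_mul_left _ _ hy]
  rw [hxz, mul_pow, pow_mul, h1, one_pow, one_mul, pow_mul', h2, one_pow]

lemma urel_map {S : Type*} [FunLike S F K] [RingHomClass S F K] (σ : S) {x y : F} :
    urel (σ x) (σ y) ↔ urel x y := by
  constructor
  · rintro ⟨k, hk, h⟩
    refine ⟨k, hk, (RingHomClass.toRingHom σ).injective ?_⟩
    have : (RingHomClass.toRingHom σ) ((x / y) ^ k) = RingHomClass.toRingHom σ 1 := by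
      simpa [map_pow, map_div₀] using h
    simpa using this
  · rintro ⟨k, hk, h⟩
    exact ⟨k, hk, by rw [← map_div₀, ← map_pow, h, map_one]⟩
end aux

lemma root_ne_zero {g : ℚ[X]} (hirr : Irreducible g) (hdeg : 2 ≤ g.natDegree)
    {K : Type*} [Field K] [Algebra ℚ K] {x : K} (hx : x ∈ g.rootSet K) : x ≠ 0 := by
  rintro rfl
  have hx' : aeval (0 : K) g = 0 := (mem_rootSet'.mp hx).2
  rw [aeval_def, eval₂_at_zero] at hx'
  have h0 : g.coeff 0 = 0 := (algebraMap ℚ K).injective (by rw [hx', map_zero])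
  obtain ⟨c, hc⟩ := X_dvd_iff.mpr h0
  rcases hirr.isUnit_or_isUnit hc with h | h
  · exact not_isUnit_X h
  · have hc0 : c ≠ 0 := h.ne_zero
    have hd : g.natDegree = 1 := by
      rw [hc, natDegree_mul X_ne_zero hc0, natDegree_X, natDegree_eq_zero_of_isUnit h]
    omega

/-- the equivalence class of `α` among roots of `g` in `ℂ`. -/
def CCl (g : ℚ[X]) (α : ℂ) : Set ℂ :=
  {β ∈ g.rootSet ℂ | ∃ k : ℕ, 0 < k ∧ (α / β) ^ k = 1}

lemma mem_CCl {g : ℚ[X]} {α β : ℂ} : β ∈ CCl g α ↔ β ∈ g.rootSet ℂ ∧ urel α β := Iff.rfl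

/-- For `f ∈ ℤ[X]` irreducible of degree `n ≥ 2`, all equivalence classes of roots of `f`
under the relation "the quotient is a root of unity" have the same cardinality `ℓ`, and
`n = s·ℓ` where `s` is the number of classes; in particular, if `f` is degenerate then
`ℓ ≥ 2` and `ℓ ∣ n`. -/
theorem equivalence_classes_of_roots (n : ℕ) (hn : 2 ≤ n) (f : Polynomial ℤ)
    (hirr : Irreducible (f.map (Int.castRingHom ℚ))) (hdeg : f.natDegree = n) :
    ∃ ℓ s : ℕ, n = s * ℓ ∧
      (∀ α ∈ f.rootSet ℂ,
        {β ∈ f.rootSet ℂ | ∃ k : ℕ, 0 < k ∧ (α / β) ^ k = 1}.ncard = ℓ) ∧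
      s = {A : Set ℂ | ∃ α ∈ f.rootSet ℂ,
        A = {β ∈ f.rootSet ℂ | ∃ k : ℕ, 0 < k ∧ (α / β) ^ k = 1}}.ncard ∧
      (2 ≤ ℓ → ℓ ∣ n) := by
  classical
  set g : ℚ[X] := f.map (Int.castRingHom ℚ) with hgdef
  have hRS : f.rootSet ℂ = g.rootSet ℂ := by
    have h1 : g.aroots ℂ = f.aroots ℂ := by
      rw [hgdef, ← algebraMap_int_eq, aroots_map]
    rw [rootSet, rootSet, h1]
  have hgdeg : g.natDegree = n := by
    rw [hgdef, natDegree_map_eq_of_injective (Int.cast_injective (α := ℚ)) f, hdeg]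
  have hgdeg2 : 2 ≤ g.natDegree := hgdeg ▸ hn
  have hgsep : g.Separable := hirr.separable
  have hsplitC : (g.map (algebraMap ℚ ℂ)).Splits := IsAlgClosed.splits _
  rw [hRS]
  set E := g.SplittingField with hE
  haveI : Normal ℚ E := Polynomial.SplittingField.instNormal g
  have hsplitE : (g.map (algebraMap ℚ E)).Splits := SplittingField.splits g
  set ι : E →ₐ[ℚ] ℂ := SplittingField.lift g hsplitC with hιdef
  have hι : ι '' g.rootSet E = g.rootSet ℂ := hsplitE.image_rootSet ι
  have hιinj : Function.Injective ι := ι.toRingHom.injective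
  -- transitivity of the Galois action on roots in the splitting field
  have htrans : ∀ a ∈ g.rootSet E, ∀ b ∈ g.rootSet E, ∃ σ : E ≃ₐ[ℚ] E, σ a = b := by
    intro a ha b hb
    have ha' := minpoly.eq_of_irreducible hirr (mem_rootSet.mp ha).2
    have hb' := minpoly.eq_of_irreducible hirr (mem_rootSet.mp hb).2
    obtain ⟨σ, hσ⟩ := (Normal.minpoly_eq_iff_mem_orbit (F := ℚ) (E := E)).mp (hb'.symm.trans ha')
    exact ⟨σ, hσ⟩
  -- classes in the splitting field
  set CE : E → Set E := fun a => {b | b ∈ g.rootSet E ∧ urel a b} with hCE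
  have hmapsE : ∀ (σ : E ≃ₐ[ℚ] E) (a : E), σ '' CE a = CE (σ a) := by
    intro σ a
    ext x
    constructor
    · rintro ⟨b, ⟨hb, hrel⟩, rfl⟩
      exact ⟨rootSet_mapsTo σ.toAlgHom hb, (urel_map σ).mpr hrel⟩
    · rintro ⟨hx, hrel⟩
      refine ⟨σ.symm x, ⟨rootSet_mapsTo σ.symm.toAlgHom hx, ?_⟩, σ.apply_symm_apply x⟩
      rw [← σ.apply_symm_apply x] at hrel
      exact (urel_map σ).mp hrel
  have hcardE : ∀ a ∈ g.rootSet E, ∀ b ∈ g.rootSet E, (CE a).ncard = (CE b).ncard := by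
    intro a ha b hb
    obtain ⟨σ, rfl⟩ := htrans a ha b hb
    rw [← hmapsE σ a, Set.ncard_image_of_injective _ σ.injective]
  -- classes in ℂ come from classes in E
  have hclassC : ∀ a ∈ g.rootSet E, CCl g (ι a) = ι '' CE a := by
    intro a ha
    ext β
    constructor
    · rintro ⟨hβ, hrel⟩
      rw [← hι] at hβ
      obtain ⟨b, hb, rfl⟩ := hβ
      exact ⟨b, ⟨hb, (urel_map ι).mp hrel⟩, rfl⟩
    · rintro ⟨b, ⟨hb, hrel⟩, rfl⟩
      exact ⟨hι ▸ Set.mem_image_of_mem ι hb, (urel_map ι).mpr hrel⟩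
  have hcardC : ∀ α ∈ g.rootSet ℂ, ∀ β ∈ g.rootSet ℂ,
      (CCl g α).ncard = (CCl g β).ncard := by
    intro α hα β hβ
    rw [← hι] at hα hβ
    obtain ⟨a, ha, rfl⟩ := hα
    obtain ⟨b, hb, rfl⟩ := hβ
    rw [hclassC a ha, hclassC b hb, Set.ncard_image_of_injective _ hιinj,
      Set.ncard_image_of_injective _ hιinj, hcardE a ha b hb]
  -- roots are nonzero, class basics
  have hnz : ∀ {x : ℂ}, x ∈ g.rootSet ℂ → x ≠ 0 := fun hx => root_ne_zero hirr hgdeg2 hx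
  have hmemself : ∀ {α : ℂ}, α ∈ g.rootSet ℂ → α ∈ CCl g α :=
    fun hα => ⟨hα, urel_refl (hnz hα)⟩
  have hclass_eq : ∀ {α β : ℂ}, α ∈ g.rootSet ℂ → β ∈ g.rootSet ℂ → urel α β →
      CCl g α = CCl g β := by
    intro α β hα hβ hab
    ext x
    simp only [mem_CCl]
    exact ⟨fun ⟨hx, h⟩ => ⟨hx, urel_trans (hnz hα) (urel_symm hab) h⟩,
      fun ⟨hx, h⟩ => ⟨hx, urel_trans (hnz hβ) hab h⟩⟩
  -- the roots as a finset
  set R : Finset ℂ := (g.aroots ℂ).toFinset with hRdef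
  have hRcoe : (R : Set ℂ) = g.rootSet ℂ := (rootSet_def g ℂ).symm
  have hmemR : ∀ {α : ℂ}, α ∈ R ↔ α ∈ g.rootSet ℂ := by
    intro α; rw [← hRcoe]; exact Finset.mem_coe.symm
  have hRcard : R.card = n := by
    have h := card_rootSet_eq_natDegree hgsep hsplitC
    rw [hgdeg] at h
    rw [← Set.ncard_coe_finset R, hRcoe, ← Nat.card_coe_set_eq, Nat.card_eq_fintype_card]
    exact h
  -- nonempty
  have hα₀ : ∃ α₀, α₀ ∈ g.rootSet ℂ := by
    have : R.Nonempty := Finset.card_pos.mp (by omega)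
    obtain ⟨α₀, h⟩ := this
    exact ⟨α₀, hmemR.mp h⟩
  obtain ⟨α₀, hα₀⟩ := hα₀
  set ℓ := (CCl g α₀).ncard with hℓ
  set T : Finset (Set ℂ) := R.image (CCl g) with hT
  -- fiber cardinality
  have hterm : ∀ b ∈ T, (R.filter fun a => CCl g a = b).card = ℓ := by
    intro b hb
    obtain ⟨α, hα, rfl⟩ := Finset.mem_image.mp hb
    have hαr := hmemR.mp hα
    have hsetfib : ((R.filter fun a => CCl g a = CCl g α) : Set ℂ) = CCl g α := by
      ext x
      simp only [Finset.coe_filter, Set.mem_setOf_eq, hmemR]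
      constructor
      · rintro ⟨hx, hEq⟩
        exact hEq ▸ hmemself hx
      · intro hx
        exact ⟨hx.1, (hclass_eq hαr hx.1 hx.2).symm⟩
    calc (R.filter fun a => CCl g a = CCl g α).card
        = ((R.filter fun a => CCl g a = CCl g α) : Set ℂ).ncard :=
          (Set.ncard_coe_finset _).symm
      _ = (CCl g α).ncard := by rw [hsetfib]
      _ = ℓ := hcardC α hαr α₀ hα₀
  have hmain : n = T.card * ℓ := by
    have h1 : R.card = ∑ b ∈ T, (R.filter fun a => CCl g a = b).card :=
      Finset.card_eq_sum_card_fiberwise fun x hx => Finset.mem_image_of_mem _ hx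
    rw [← hRcard, h1, Finset.sum_congr rfl hterm, Finset.sum_const, smul_eq_mul]
  refine ⟨ℓ, T.card, hmain, fun α hα => hcardC α hα α₀ hα₀, ?_, fun _ => ⟨T.card, by
    rw [hmain, mul_comm]⟩⟩
  -- the set of classes is the image finset
  have : {A : Set ℂ | ∃ α ∈ g.rootSet ℂ, A = CCl g α} = (↑T : Set (Set ℂ)) := by
    ext A
    simp only [Set.mem_setOf_eq, hT, Finset.coe_image, Set.mem_image, Finset.mem_coe]
    constructor
    · rintro ⟨α, hα, rfl⟩; exact ⟨α, hmemR.mpr hα, rfl⟩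
    · rintro ⟨α, hα, rfl⟩; exact ⟨α, hmemR.mp hα, rfl⟩
  show T.card = {A : Set ℂ | ∃ α ∈ g.rootSet ℂ, A = CCl g α}.ncard
  rw [this]
  exact (Set.ncard_coe_finset T).symm
end

section
/- Let ℓ ≥ 2 and let g ∈ ℤ[X] be a monic irreducible polynomial of degree m with a root γ > 0 such that every other root of g has modulus strictly less than γ, and such that |g(0)| = 2q with q an odd positive integer. Then the polynomial f(X) = g(X^ℓ) is irreducible over ℚ. -/
open Polynomial IntermediateField

lemma aux_no_root (q : ℤ) (hq : 0 < q) (hodd : Odd q)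
    (K : Type) [Field K] [Algebra ℚ K] [FiniteDimensional ℚ K]
    {a : K} (ha : IsIntegral ℤ a) (hna : (Algebra.norm ℚ a) ^ 2 = (2 * q : ℚ) ^ 2)
    {p : ℕ} (hp : p.Prime) (b : K) : b ^ p ≠ a := by
  intro hb
  have hb' : IsIntegral ℤ b := IsIntegral.of_pow hp.pos (hb ▸ ha)
  have hnormInt : IsIntegral ℤ (Algebra.norm ℚ b) := Algebra.isIntegral_norm ℚ hb'
  obtain ⟨n, hn⟩ := IsIntegrallyClosed.isIntegral_iff.mp hnormInt
  have h1 : ((n : ℚ)) ^ (2 * p) = (2 * q : ℚ) ^ 2 := by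
    have hn' : (n : ℚ) = Algebra.norm ℚ b := by rw [← hn]; simp
    calc ((n : ℚ)) ^ (2 * p) = ((Algebra.norm ℚ b) ^ p) ^ 2 := by rw [hn']; ring
      _ = (Algebra.norm ℚ (b ^ p)) ^ 2 := by rw [map_pow]
      _ = (2 * q : ℚ) ^ 2 := by rw [hb, hna]
  have h2 : n ^ (2 * p) = (2 * q) ^ 2 := by exact_mod_cast h1
  rcases Int.even_or_odd n with he | ho
  · have h8 : (8 : ℤ) ∣ n ^ (2 * p) := by
      have h3 : (2 : ℤ) ^ 3 ∣ n ^ (2 * p) :=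
        dvd_trans (pow_dvd_pow 2 (by have := hp.two_le; omega))
          (pow_dvd_pow_of_dvd he.two_dvd _)
      simpa using h3
    rw [h2] at h8
    obtain ⟨c, hc⟩ := h8
    have h5 : q ^ 2 = 2 * c := by nlinarith
    have h6 : Odd (q ^ 2) := hodd.pow
    exact (Int.not_odd_iff_even.mpr ⟨c, by omega⟩) h6
  · have h7 : Odd (n ^ (2 * p)) := ho.pow
    rw [h2] at h7
    have : ¬ Odd ((2 * q) ^ 2) := by
      rw [Int.not_odd_iff_even]
      exact ⟨2 * q ^ 2, by ring⟩
    exact this h7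

lemma aux_key_s9 (q : ℤ) (hq : 0 < q) (hodd : Odd q) (ℓ : ℕ) :
    ℓ ≠ 0 → ∀ (K : Type) [Field K] [Algebra ℚ K] [FiniteDimensional ℚ K]
      (a : K), IsIntegral ℤ a → (Algebra.norm ℚ a) ^ 2 = (2 * q : ℚ) ^ 2 →
      Irreducible (X ^ ℓ - C a) := by
  induction ℓ using Nat.strong_induction_on with
  | _ ℓ IH =>
    intro hℓ K _ _ _ a ha hna
    by_cases h1 : ℓ = 1
    · subst h1; simpa using irreducible_X_sub_C a
    · have hp : (ℓ.minFac).Prime := Nat.minFac_prime h1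
      have hdvd := Nat.minFac_dvd ℓ
      have hℓeq : ℓ / ℓ.minFac * ℓ.minFac = ℓ := Nat.div_mul_cancel hdvd
      rw [← hℓeq]
      apply X_pow_mul_sub_C_irreducible
        (X_pow_sub_C_irreducible_of_prime hp (fun b => aux_no_root q hq hodd K ha hna hp b))
      intro E _ _ x hx
      have hxint : IsIntegral K x := not_not.mp fun h ↦ by
        simpa only [degree_zero, degree_X_pow_sub_C hp.pos, WithBot.natCast_ne_bot]
          using congr_arg degree (hx.symm.trans (dif_neg h))
      haveI := IntermediateField.adjoin.finiteDimensional hxint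
      haveI : CharZero K := charZero_of_injective_algebraMap (algebraMap ℚ K).injective
      haveI : CharZero K⟮x⟯ :=
        charZero_of_injective_algebraMap (algebraMap K K⟮x⟯).injective
      haveI : IsScalarTower ℚ K K⟮x⟯ :=
        IsScalarTower.of_algebraMap_eq' (Subsingleton.elim _ _)
      haveI : FiniteDimensional ℚ K⟮x⟯ := FiniteDimensional.trans ℚ K K⟮x⟯
      -- the generator
      have hgen : (AdjoinSimple.gen K x) ^ ℓ.minFac = algebraMap K K⟮x⟯ a := by
        have hx0 : x ^ ℓ.minFac = algebraMap K E a := by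
          have := minpoly.aeval K x
          rw [hx] at this
          simp only [map_sub, map_pow, aeval_X, aeval_C, sub_eq_zero] at this
          exact this
        ext
        push_cast
        exact hx0
      have hgint : IsIntegral ℤ (AdjoinSimple.gen K x) := by
        refine IsIntegral.of_pow hp.pos ?_
        rw [hgen]
        exact ha.map (IsScalarTower.toAlgHom ℤ K K⟮x⟯)
      -- the norm of the generator
      have hming : minpoly K (AdjoinSimple.gen K x) = X ^ ℓ.minFac - C a := by
        rw [minpoly_gen, hx]
      have hnormgen : (Algebra.norm K (AdjoinSimple.gen K x)) ^ 2 = a ^ 2 := by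
        have pb := IntermediateField.adjoin.powerBasis hxint
        have h := Algebra.PowerBasis.norm_gen_eq_coeff_zero_minpoly
          (IntermediateField.adjoin.powerBasis hxint)
        rw [IntermediateField.adjoin.powerBasis_gen, hming] at h
        have hc0 : (X ^ ℓ.minFac - C a).coeff 0 = -a := by
          simp [coeff_X_pow, hp.pos.ne]
        rw [hc0] at h
        rw [h]
        rw [mul_pow, ← pow_mul, mul_comm _ 2, pow_mul]
        simp
      have hnorm2 : (Algebra.norm ℚ (AdjoinSimple.gen K x)) ^ 2 = (2 * q : ℚ) ^ 2 := by
        rw [← Algebra.norm_norm (R := ℚ) (S := K) (a := AdjoinSimple.gen K x), ← map_pow,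
          hnormgen, map_pow, hna]
      exact IH (ℓ / ℓ.minFac) (Nat.div_lt_self (by omega) hp.one_lt)
        (by intro h0; rw [h0] at hℓeq; omega) K⟮x⟯ (AdjoinSimple.gen K x) hgint hnorm2

/-- Let `ℓ ≥ 2` and let `g ∈ ℤ[X]` be monic irreducible with a positive real root `γ`
dominating the moduli of all other roots, and with `|g(0)| = 2q` for `q` odd positive.
Then `g(X^ℓ)` is irreducible over `ℚ`. -/
theorem comp_pow_irreducible (ℓ : ℕ) (hℓ : 2 ≤ ℓ) (g : Polynomial ℤ) (m : ℕ)
    (hmonic : g.Monic) (hdeg : g.natDegree = m)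
    (hirr : Irreducible (g.map (Int.castRingHom ℚ)))
    (γ : ℝ) (hγ : 0 < γ) (hroot : Polynomial.aeval (γ : ℂ) g = 0)
    (hdom : ∀ z : ℂ, Polynomial.aeval z g = 0 → z ≠ (γ : ℂ) → ‖z‖ < γ)
    (q : ℤ) (hq : 0 < q) (hodd : Odd q) (hconst : |g.coeff 0| = 2 * q) :
    Irreducible ((g.comp (X ^ ℓ)).map (Int.castRingHom ℚ)) := by
  have hmap : (g.comp (X ^ ℓ)).map (Int.castRingHom ℚ)
      = (g.map (Int.castRingHom ℚ)).comp (X ^ ℓ) := by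
    rw [Polynomial.map_comp]; simp
  rw [hmap]
  apply Polynomial.irreducible_comp (hmonic.map _) (monic_X_pow ℓ) hirr
  intro E _ _ x hx
  simp only [Polynomial.map_pow, map_X]
  have hxq : IsIntegral ℚ x := by
    by_contra h
    exact (hmonic.map (Int.castRingHom ℚ)).ne_zero (hx ▸ minpoly.eq_zero h)
  letI : Algebra ℚ ↥ℚ⟮x⟯ := IntermediateField.algebra' ℚ⟮x⟯
  haveI := IntermediateField.adjoin.finiteDimensional hxq
  -- x is integral over ℤ
  have hax : (Polynomial.aeval x) g = 0 := by
    have h0 := minpoly.aeval ℚ x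
    rw [hx] at h0
    rwa [← algebraMap_int_eq, Polynomial.aeval_map_algebraMap ℚ x g] at h0
  have hxint : IsIntegral ℤ x := ⟨g, hmonic, by simpa [Polynomial.aeval_def] using hax⟩
  have hgint : IsIntegral ℤ (AdjoinSimple.gen ℚ x) := by
    rw [← isIntegral_algHom_iff ((IntermediateField.val ℚ⟮x⟯).restrictScalars ℤ)
      Subtype.val_injective]
    exact hxint
  have hnorm2 : (Algebra.norm ℚ (AdjoinSimple.gen ℚ x)) ^ 2 = (2 * q : ℚ) ^ 2 := by
    have h := Algebra.PowerBasis.norm_gen_eq_coeff_zero_minpoly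
      (IntermediateField.adjoin.powerBasis hxq)
    rw [IntermediateField.adjoin.powerBasis_gen, minpoly_gen, hx] at h
    rw [h, mul_pow, ← pow_mul, mul_comm _ 2, pow_mul]
    simp only [neg_one_sq, one_pow, one_mul]
    rw [coeff_map, eq_intCast]
    have h2 : (g.coeff 0) ^ 2 = (2 * q) ^ 2 := by rw [← sq_abs, hconst]
    exact_mod_cast h2
  exact aux_key_s9 q hq hodd ℓ (by omega) ℚ⟮x⟯ (AdjoinSimple.gen ℚ x) hgint hnorm2
end

section
/- Let n ≥ 2 and H ≥ 1 be integers. The number of degenerate monic polynomials X^n + a_1 X^{n-1} + ... + a_n ∈ ℤ[X] with |a_j| ≤ H for all j is O(H^{n-1}), where the implied constant depends only on n. -/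
open Polynomial

lemma totient_aux : ∀ k : ℕ, (Odd k → k ≤ (Nat.totient k)^2) ∧ k ≤ 2 * (Nat.totient k)^2 := by
  intro k
  induction k using Nat.recOnPosPrimePosCoprime with
  | prime_pow p n hp hn =>
      have htot : Nat.totient (p ^ n) = p ^ (n - 1) * (p - 1) := Nat.totient_prime_pow hp hn
      rcases eq_or_ne p 2 with rfl | hp2
      · constructor
        · intro hodd
          have h2 : 2 ∣ 2^n := dvd_pow_self 2 hn.ne'
          rw [Nat.odd_iff] at hodd
          omega
        · rw [htot]
          have e : 2 * (2 ^ (n - 1) * (2 - 1)) ^ 2 = 2 ^ (2*n - 1) := by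
            rw [Nat.mul_one, ← pow_mul, show 2*n-1 = (n-1)*2+1 from by omega]
            ring
          rw [e]
          exact Nat.pow_le_pow_right (by norm_num) (by omega)
      · have hp3 : 3 ≤ p := by
          rcases hp.two_le.lt_or_eq with h | h
          · omega
          · omega
        have key : p ^ n ≤ (p ^ (n - 1) * (p - 1)) ^ 2 := by
          have h1 : p ≤ (p - 1)^2 := by
            obtain ⟨q, rfl⟩ : ∃ q, p = q + 1 := ⟨p - 1, by omega⟩
            simp only [Nat.add_sub_cancel]
            nlinarith [show 2 ≤ q from by omega]
          calc p ^ n ≤ p ^ (2*n - 2) * p := by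
                rw [← pow_succ]
                exact Nat.pow_le_pow_right hp.pos (by omega)
            _ ≤ p ^ (2*n-2) * (p-1)^2 := Nat.mul_le_mul_left _ h1
            _ = (p ^ (n-1))^2 * (p-1)^2 := by rw [← pow_mul]; congr 2; omega
            _ = (p ^ (n - 1) * (p - 1)) ^ 2 := (mul_pow _ _ _).symm
        refine ⟨fun _ => by rw [htot]; exact key, ?_⟩
        rw [htot]; omega
  | zero => simp
  | one => simp
  | coprime a b ha hb hab iha ihb =>
      have htot : Nat.totient (a * b) = Nat.totient a * Nat.totient b := Nat.totient_mul hab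
      rw [htot]
      constructor
      · intro hodd
        rw [Nat.odd_mul] at hodd
        have h1 := iha.1 hodd.1
        have h2 := ihb.1 hodd.2
        calc a * b ≤ (Nat.totient a)^2 * (Nat.totient b)^2 := Nat.mul_le_mul h1 h2
          _ = (Nat.totient a * Nat.totient b)^2 := (mul_pow _ _ _).symm
      · have : Odd a ∨ Odd b := by
          by_contra hc
          push_neg at hc
          rw [Nat.not_odd_iff_even, Nat.not_odd_iff_even] at hc
          have h2 : (2:ℕ) ∣ Nat.gcd a b := Nat.dvd_gcd hc.1.two_dvd hc.2.two_dvd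
          rw [Nat.Coprime] at hab
          omega
        rcases this with hoa | hob
        · have h1 := iha.1 hoa
          have h2 := ihb.2
          calc a * b ≤ (Nat.totient a)^2 * (2 * (Nat.totient b)^2) := Nat.mul_le_mul h1 h2
            _ = 2 * (Nat.totient a * Nat.totient b)^2 := by ring
        · have h1 := iha.2
          have h2 := ihb.1 hob
          calc a * b ≤ (2 * (Nat.totient a)^2) * (Nat.totient b)^2 := Nat.mul_le_mul h1 h2
            _ = 2 * (Nat.totient a * Nat.totient b)^2 := by ring

lemma le_of_totient_le {k m : ℕ} (h : Nat.totient k ≤ m) : k ≤ 2 * m^2 :=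
  le_trans (totient_aux k).2 (by nlinarith)

open Polynomial IntermediateField Module

set_option maxHeartbeats 1000000 in
lemma order_bound (n : ℕ) (hn : 0 < n) (f : Polynomial ℤ) (hf0 : f ≠ 0) (hdeg : f.natDegree ≤ n)
    (α β : ℂ) (hα : Polynomial.aeval α f = 0) (hβ : Polynomial.aeval β f = 0)
    (k : ℕ) (hk : 0 < k) (hηk : (α / β) ^ k = 1) :
    (α / β) ^ (Nat.factorial (2 * (n * n) ^ 2)) = 1 := by
  have hβ0 : β ≠ 0 := by
    rintro rfl
    rw [div_zero, zero_pow hk.ne'] at hηk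
    exact zero_ne_one hηk
  set η : ℂ := α / β with hη
  set fQ : Polynomial ℚ := f.map (algebraMap ℤ ℚ) with hfQ
  have hfQ0 : fQ ≠ 0 := fun h => hf0 (Polynomial.map_injective _ (algebraMap ℤ ℚ).injective_int (by simpa [hfQ] using h))
  have hfQdeg : fQ.natDegree ≤ n := by
    rw [hfQ, Polynomial.natDegree_map_eq_of_injective (algebraMap ℤ ℚ).injective_int]
    exact hdeg
  have hαQ : Polynomial.aeval α fQ = 0 := by rwa [hfQ, Polynomial.aeval_map_algebraMap]
  have hβQ : Polynomial.aeval β fQ = 0 := by rwa [hfQ, Polynomial.aeval_map_algebraMap]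
  have hintα : IsIntegral ℚ α := (IsAlgebraic.isIntegral ⟨fQ, hfQ0, hαQ⟩)
  have hintβ : IsIntegral ℚ β := (IsAlgebraic.isIntegral ⟨fQ, hfQ0, hβQ⟩)
  -- towers
  set K1 : IntermediateField ℚ ℂ := ℚ⟮α⟯ with hK1
  haveI : FiniteDimensional ℚ K1 := IntermediateField.adjoin.finiteDimensional hintα
  have hintβ1 : IsIntegral K1 β := hintβ.tower_top
  set K2 : IntermediateField K1 ℂ := K1⟮β⟯ with hK2
  haveI : FiniteDimensional K1 K2 := IntermediateField.adjoin.finiteDimensional hintβ1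
  haveI : FiniteDimensional ℚ K2 := FiniteDimensional.trans ℚ K1 K2
  have hd1 : finrank ℚ K1 ≤ n := by
    rw [IntermediateField.adjoin.finrank hintα]
    exact Polynomial.natDegree_le_of_dvd (minpoly.dvd ℚ α hαQ) hfQ0 |>.trans hfQdeg
  have hd2 : finrank K1 K2 ≤ n := by
    rw [IntermediateField.adjoin.finrank hintβ1]
    have hdvd : minpoly K1 β ∣ fQ.map (algebraMap ℚ K1) := by
      apply minpoly.dvd
      rwa [Polynomial.aeval_map_algebraMap]
    have hne : fQ.map (algebraMap ℚ K1) ≠ 0 := by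
      simpa using (Polynomial.map_ne_zero_iff (algebraMap ℚ K1).injective).2 hfQ0
    calc (minpoly K1 β).natDegree ≤ (fQ.map (algebraMap ℚ K1)).natDegree :=
          Polynomial.natDegree_le_of_dvd hdvd hne
      _ = fQ.natDegree := Polynomial.natDegree_map_eq_of_injective (algebraMap ℚ K1).injective _
      _ ≤ n := hfQdeg
  have hfr : finrank ℚ K2 ≤ n * n := by
    have := Module.finrank_mul_finrank ℚ K1 K2
    rw [← this]
    exact Nat.mul_le_mul hd1 hd2
  -- η lives in K2
  have hαK2 : α ∈ K2 := by
    have h1 : α ∈ K1 := IntermediateField.mem_adjoin_simple_self ℚ α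
    exact K2.algebraMap_mem ⟨α, h1⟩
  have hβK2 : β ∈ K2 := IntermediateField.mem_adjoin_simple_self K1 β
  have hηK2 : η ∈ K2 := div_mem hαK2 hβK2
  set η' : K2 := ⟨η, hηK2⟩ with hη'
  have hη'pow : ∀ m : ℕ, η' ^ m = 1 ↔ η ^ m = 1 := by
    intro m
    constructor
    · intro h; have := congrArg (Subtype.val) h; push_cast at this; simpa using this
    · intro h; ext; push_cast; simpa using h
  have hfin : IsOfFinOrder η' := isOfFinOrder_iff_pow_eq_one.2 ⟨k, hk, (hη'pow k).2 hηk⟩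
  set k0 : ℕ := orderOf η' with hk0
  have hk0pos : 0 < k0 := hfin.orderOf_pos
  have hprim : IsPrimitiveRoot η' k0 := IsPrimitiveRoot.orderOf η'
  haveI : CharZero K2 := (algebraMap K2 ℂ).charZero
  have hcyc : Polynomial.cyclotomic k0 ℚ = minpoly ℚ η' :=
    Polynomial.cyclotomic_eq_minpoly_rat hprim hk0pos
  have htot : Nat.totient k0 ≤ n * n := by
    have h1 : (minpoly ℚ η').natDegree ≤ finrank ℚ K2 := minpoly.natDegree_le η'
    rw [← hcyc, Polynomial.natDegree_cyclotomic] at h1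
    exact h1.trans hfr
  have hk0le : k0 ≤ 2 * (n * n) ^ 2 := le_of_totient_le htot
  have hdvd : k0 ∣ Nat.factorial (2 * (n * n) ^ 2) := Nat.dvd_factorial hk0pos hk0le
  obtain ⟨m, hm⟩ := hdvd
  have : η ^ k0 = 1 := (hη'pow k0).1 (pow_orderOf_eq_one η')
  rw [hm, pow_mul, this, one_pow]

noncomputable def Lnum (n : ℕ) : ℕ := Nat.factorial (2 * (n * n) ^ 2)

lemma Lnum_pos (n : ℕ) : 0 < Lnum n := Nat.factorial_pos _

noncomputable def ccF (n : ℕ) (w : ℕ → ℤ) (j : ℕ) : ℂ := if j = n then 1 else (w j : ℂ)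

noncomputable def gpF (n : ℕ) (w : ℕ → ℤ) (η : ℂ) : Polynomial ℂ :=
  ∑ j ∈ Finset.range n, Polynomial.C (ccF n w (j+1) * (1 - η ^ (j+1))) * Polynomial.X ^ (j+1)

noncomputable def rootsT (n : ℕ) : Finset ℂ :=
  ((Polynomial.nthRoots (Lnum n) (1 : ℂ)).toFinset).erase 1

noncomputable def PbigF (n : ℕ) (w : ℕ → ℤ) : Polynomial ℂ := ∏ η ∈ rootsT n, gpF n w η

noncomputable def allowedF (n : ℕ) (w : ℕ → ℤ) : Finset ℂ :=
  (PbigF n w).roots.toFinset.image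
    (fun b => -∑ j ∈ Finset.range n, ccF n w (j+1) * b ^ (j+1))

lemma gpF_coeff_one (n : ℕ) (hn : 2 ≤ n) (w : ℕ → ℤ) (η : ℂ) :
    (gpF n w η).coeff 1 = (w 1 : ℂ) * (1 - η) := by
  rw [gpF, Polynomial.finset_sum_coeff]
  rw [Finset.sum_eq_single 0]
  · rw [Polynomial.coeff_C_mul, pow_one, Polynomial.coeff_X_pow, if_pos rfl, mul_one]
    have : (1:ℕ) ≠ n := by omega
    simp [ccF, this]
  · intro j _ hj
    rw [Polynomial.coeff_C_mul, Polynomial.coeff_X_pow, if_neg (by omega), mul_zero]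
  · intro h
    exact absurd (Finset.mem_range.2 (by omega)) h

lemma gpF_ne_zero (n : ℕ) (hn : 2 ≤ n) (w : ℕ → ℤ) (hw : w 1 ≠ 0) (η : ℂ) (hη : η ≠ 1) :
    gpF n w η ≠ 0 := by
  intro h
  have := gpF_coeff_one n hn w η
  rw [h, Polynomial.coeff_zero] at this
  have h1 : (w 1 : ℂ) ≠ 0 := Int.cast_ne_zero.2 hw
  have h2 : (1 : ℂ) - η ≠ 0 := sub_ne_zero.2 (Ne.symm hη)
  exact (mul_ne_zero h1 h2) this.symm

lemma gpF_natDegree_le (n : ℕ) (w : ℕ → ℤ) (η : ℂ) : (gpF n w η).natDegree ≤ n := by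
  apply Polynomial.natDegree_sum_le_of_forall_le
  intro j hj
  rw [Finset.mem_range] at hj
  exact (Polynomial.natDegree_C_mul_X_pow_le _ _).trans (by omega)

lemma PbigF_ne_zero (n : ℕ) (hn : 2 ≤ n) (w : ℕ → ℤ) (hw : w 1 ≠ 0) : PbigF n w ≠ 0 := by
  rw [PbigF, Finset.prod_ne_zero_iff]
  intro η hη
  exact gpF_ne_zero n hn w hw η (Finset.mem_erase.1 hη).1

lemma allowedF_card (n : ℕ) (w : ℕ → ℤ) : (allowedF n w).card ≤ Lnum n * n := by
  refine (Finset.card_image_le).trans ?_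
  refine (Multiset.toFinset_card_le _).trans ?_
  refine (Polynomial.card_roots' _).trans ?_
  refine (Polynomial.natDegree_prod_le _ _).trans ?_
  calc ∑ η ∈ rootsT n, (gpF n w η).natDegree ≤ ∑ _η ∈ rootsT n, n :=
        Finset.sum_le_sum fun η _ => gpF_natDegree_le n w η
    _ = (rootsT n).card * n := by rw [Finset.sum_const, smul_eq_mul]
    _ ≤ Lnum n * n := by
        apply Nat.mul_le_mul_right
        refine (Finset.card_erase_le).trans ?_
        refine (Multiset.toFinset_card_le _).trans ?_
        exact Polynomial.card_nthRoots _ _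

lemma allowedF_congr (n : ℕ) (w w' : ℕ → ℤ) (h : ∀ j, 1 ≤ j → j < n → w j = w' j) :
    allowedF n w = allowedF n w' := by
  have hcc : ∀ j, j < n → ccF n w (j+1) = ccF n w' (j+1) := by
    intro j hj
    rcases eq_or_ne (j+1) n with he | hne
    · simp [ccF, he]
    · simp [ccF, hne, h (j+1) (by omega) (by omega)]
  have hgp : ∀ η, gpF n w η = gpF n w' η := by
    intro η
    apply Finset.sum_congr rfl
    intro j hj
    rw [hcc j (Finset.mem_range.1 hj)]
  have hP : PbigF n w = PbigF n w' := Finset.prod_congr rfl fun η _ => hgp η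
  rw [allowedF, allowedF, hP]
  apply Finset.image_congr
  intro b _
  exact congrArg Neg.neg (Finset.sum_congr rfl fun j hj => by rw [hcc j (Finset.mem_range.1 hj)])

lemma key_mem (n : ℕ) (hn : 2 ≤ n) (f : Polynomial ℤ) (hm : f.Monic) (hd : f.natDegree = n)
    (h1 : f.coeff 1 ≠ 0) (hdeg : IsDegenerate f) :
    ((f.coeff 0 : ℂ)) ∈ allowedF n (fun j => f.coeff j) := by
  set w : ℕ → ℤ := fun j => f.coeff j with hw
  obtain ⟨α, β, hα, hβ, hne, k, hk, hηk⟩ := hdeg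
  have hβ0 : β ≠ 0 := by
    rintro rfl
    rw [div_zero, zero_pow hk.ne'] at hηk
    exact zero_ne_one hηk
  set η : ℂ := α / β with hη
  have hβα : η * β = α := div_mul_cancel₀ α hβ0
  have hηL : η ^ Lnum n = 1 :=
    order_bound n (by omega) f hm.ne_zero hd.le α β hα hβ k hk hηk
  have hη1 : η ≠ 1 := fun h => hne (by rw [← hβα, h, one_mul])
  have hηT : η ∈ rootsT n :=
    Finset.mem_erase.2 ⟨hη1, Multiset.mem_toFinset.2
      ((Polynomial.mem_nthRoots (Lnum_pos n)).2 hηL)⟩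
  have hev : ∀ x : ℂ, Polynomial.aeval x f = ∑ j ∈ Finset.range (n+1), ccF n w j * x ^ j := by
    intro x
    rw [Polynomial.aeval_eq_sum_range' (show f.natDegree < n+1 by omega)]
    apply Finset.sum_congr rfl
    intro j hj
    rcases eq_or_ne j n with rfl | hjn
    · have : f.coeff j = 1 := by rw [← hd]; exact hm.coeff_natDegree
      simp [ccF, this]
    · simp [ccF, hjn, zsmul_eq_mul, hw]
  have heq0 : Polynomial.eval β (gpF n w η) = 0 := by
    rw [gpF]
    rw [Polynomial.eval_finset_sum]
    simp only [Polynomial.eval_mul, Polynomial.eval_C, Polynomial.eval_pow, Polynomial.eval_X]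
    have expand : ∑ j ∈ Finset.range n, ccF n w (j+1) * (1 - η ^ (j+1)) * β ^ (j+1)
        = (∑ j ∈ Finset.range (n+1), ccF n w j * β ^ j)
          - (∑ j ∈ Finset.range (n+1), ccF n w j * (η * β) ^ j) := by
      rw [← Finset.sum_sub_distrib, Finset.sum_range_succ']
      have hzero : ccF n w 0 * β ^ 0 - ccF n w 0 * (η * β) ^ 0 = 0 := by ring
      rw [hzero, add_zero]
      apply Finset.sum_congr rfl
      intro j _
      rw [mul_pow]
      ring
    rw [expand, ← hev β, ← hev (η * β), hβα, hα, hβ, sub_zero]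
  have hroot : β ∈ (PbigF n w).roots.toFinset := by
    rw [Multiset.mem_toFinset, Polynomial.mem_roots (PbigF_ne_zero n hn w h1)]
    rw [Polynomial.IsRoot, PbigF, Polynomial.eval_prod]
    exact Finset.prod_eq_zero hηT heq0
  have hc0 : (f.coeff 0 : ℂ) = -∑ j ∈ Finset.range n, ccF n w (j+1) * β ^ (j+1) := by
    have h := hβ
    rw [hev β, Finset.sum_range_succ'] at h
    have hcc0 : ccF n w 0 = (f.coeff 0 : ℂ) := by simp [ccF, (show (0:ℕ) ≠ n by omega), hw]
    rw [hcc0, pow_zero, mul_one] at h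
    linear_combination h
  exact Finset.mem_image.2 ⟨β, hroot, hc0.symm⟩
/-- For fixed `n ≥ 2`, the number of degenerate monic integer polynomials of degree `n`
and height at most `H` is `O(H^{n-1})`. -/
theorem degenerate_monic_count_upper (n : ℕ) (hn : 2 ≤ n) :
    ∃ C : ℝ, 0 < C ∧ ∀ H : ℕ, 1 ≤ H →
      ({f : Polynomial ℤ | f.Monic ∧ f.natDegree = n ∧
          (∀ i, |f.coeff i| ≤ (H : ℤ)) ∧ IsDegenerate f}.ncard : ℝ) ≤
        C * (H : ℝ) ^ (n - 1) := by
  classical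
  set D : ℕ := Lnum n * n with hD
  refine ⟨((D : ℝ) + 1) * 3 ^ (n - 1), by positivity, ?_⟩
  intro H hH
  set S : Set (Polynomial ℤ) := {f : Polynomial ℤ | f.Monic ∧ f.natDegree = n ∧
      (∀ i, |f.coeff i| ≤ (H : ℤ)) ∧ IsDegenerate f} with hS
  set φ : Polynomial ℤ → (Fin n → ℤ) := fun f i => f.coeff i with hφ
  have hinj : Set.InjOn φ S := by
    intro f hf g hg hfg
    obtain ⟨hmf, hdf, -, -⟩ := hf
    obtain ⟨hmg, hdg, -, -⟩ := hg
    ext i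
    rcases lt_trichotomy i n with h | rfl | h
    · exact congrFun hfg ⟨i, h⟩
    · rw [← hdf, hmf.coeff_natDegree, hdf, ← hdg, hmg.coeff_natDegree]
    · rw [Polynomial.coeff_eq_zero_of_natDegree_lt (by omega : f.natDegree < i),
        Polynomial.coeff_eq_zero_of_natDegree_lt (by omega : g.natDegree < i)]
  set z0 : Fin n := ⟨0, by omega⟩ with hz0
  set z1 : Fin n := ⟨1, by omega⟩ with hz1
  set B : Finset ℤ := Finset.Icc (-(H : ℤ)) (H : ℤ) with hB
  have hBcard : B.card = 2 * H + 1 := by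
    rw [hB, Int.card_Icc]
    omega
  set wOf : (Fin n → ℤ) → ℕ → ℤ := fun v j => if h : j < n then v ⟨j, h⟩ else 0 with hwOf
  set V0 : Finset (Fin n → ℤ) :=
    Fintype.piFinset (fun i => if (i : ℕ) = 1 then ({0} : Finset ℤ) else B) with hV0
  set V1 : Finset (Fin n → ℤ) :=
    (Fintype.piFinset (fun _ : Fin n => B)).filter
      (fun v => ((v z0 : ℤ) : ℂ) ∈ allowedF n (wOf v)) with hV1
  have hsub : φ '' S ⊆ ↑(V0 ∪ V1) := by
    rintro _ ⟨f, hf, rfl⟩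
    obtain ⟨hm, hd, hb, hdeg⟩ := hf
    rw [Finset.coe_union]
    by_cases h1 : f.coeff 1 = 0
    · left
      rw [Finset.mem_coe, Fintype.mem_piFinset]
      intro i
      by_cases hi : (i : ℕ) = 1
      · rw [if_pos hi]
        simp only [Finset.mem_singleton, hφ]
        rw [hi, h1]
      · rw [if_neg hi]
        exact Finset.mem_Icc.2 (abs_le.1 (hb i))
    · right
      rw [Finset.mem_coe, hV1, Finset.mem_filter]
      constructor
      · rw [Fintype.mem_piFinset]
        intro i
        exact Finset.mem_Icc.2 (abs_le.1 (hb i))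
      · have hcongr : allowedF n (wOf (φ f)) = allowedF n (fun j => f.coeff j) := by
          apply allowedF_congr
          intro j _ hjn
          simp only [hwOf, dif_pos hjn, hφ]
        rw [hcongr]
        exact key_mem n hn f hm hd h1 hdeg
  -- cards
  have hpi : ∀ m : ℕ, m < n → (Fintype.piFinset
      (fun i : Fin n => if (i : ℕ) = m then ({0} : Finset ℤ) else B)).card
      = (2 * H + 1) ^ (n - 1) := by
    intro m hm
    have hz : (⟨m, hm⟩ : Fin n) ∈ Finset.univ := Finset.mem_univ _
    have hprod : ∏ i ∈ Finset.univ.erase (⟨m, hm⟩ : Fin n),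
        (if (i : ℕ) = m then ({0} : Finset ℤ) else B).card = (2 * H + 1) ^ (n - 1) := by
      calc ∏ i ∈ Finset.univ.erase (⟨m, hm⟩ : Fin n),
            (if (i : ℕ) = m then ({0} : Finset ℤ) else B).card
          = ∏ _i ∈ Finset.univ.erase (⟨m, hm⟩ : Fin n), (2 * H + 1) :=
            Finset.prod_congr rfl (fun i hi => by
              rw [if_neg (fun him => (Finset.mem_erase.1 hi).1 (Fin.ext him)), hBcard])
        _ = (2 * H + 1) ^ (n - 1) := by
            rw [Finset.prod_const, Finset.card_erase_of_mem hz, Finset.card_univ,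
              Fintype.card_fin]
    rw [Fintype.card_piFinset, ← Finset.mul_prod_erase _ _ hz, if_pos rfl,
      Finset.card_singleton, one_mul, hprod]
  have hV0card : V0.card = (2 * H + 1) ^ (n - 1) := by
    rw [hV0]; exact hpi 1 (by omega)
  have hV1card : V1.card ≤ D * (2 * H + 1) ^ (n - 1) := by
    set T0 : Finset (Fin n → ℤ) :=
      Fintype.piFinset (fun i : Fin n => if (i : ℕ) = 0 then ({0} : Finset ℤ) else B) with hT0
    have hT0card : T0.card = (2 * H + 1) ^ (n - 1) := by
      rw [hT0]; exact hpi 0 (by omega)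
    have key := Finset.card_le_mul_card_image_of_maps_to
      (f := fun v : Fin n → ℤ => Function.update v z0 0) (s := V1) (t := T0) ?_ D ?_
    · rw [hT0card] at key
      exact key
    · intro v hv
      rw [hV1, Finset.mem_filter, Fintype.mem_piFinset] at hv
      rw [Fintype.mem_piFinset]
      intro i
      show Function.update v z0 0 i ∈ _
      by_cases hi : (i : ℕ) = 0
      · rw [if_pos hi, show i = z0 from Fin.ext hi, Function.update_self]
        exact Finset.mem_singleton_self 0
      · rw [if_neg hi, Function.update_of_ne (fun h => hi (by rw [h]))]
        exact hv.1 i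
    · intro u _
      apply Finset.card_le_card_of_injOn (f := fun v : Fin n → ℤ => ((v z0 : ℤ) : ℂ))
        (t := allowedF n (wOf u)) ?_ ?_ |>.trans (allowedF_card n (wOf u))
      · intro v hv
        rw [Finset.mem_coe, Finset.mem_filter] at hv
        obtain ⟨hv1, hvu⟩ := hv
        rw [hV1, Finset.mem_filter] at hv1
        have hvu' : Function.update v z0 0 = u := hvu
        have hcongr : allowedF n (wOf v) = allowedF n (wOf u) := by
          apply allowedF_congr
          intro j hj1 hjn
          have hne : (⟨j, hjn⟩ : Fin n) ≠ z0 := by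
            intro h
            have h2 : j = 0 := congrArg Fin.val h
            omega
          simp only [hwOf, dif_pos hjn]
          rw [← hvu', Function.update_of_ne hne]
        rw [← hcongr]
        exact hv1.2
      · intro v hv v' hv' hvv
        rw [Finset.mem_coe, Finset.mem_filter] at hv hv'
        have h0 : v z0 = v' z0 := Int.cast_injective hvv
        have hv2 : Function.update v z0 0 = u := hv.2
        have hv2' : Function.update v' z0 0 = u := hv'.2
        have hu : Function.update v z0 0 = Function.update v' z0 0 := by rw [hv2, hv2']
        funext i
        by_cases hi : i = z0
        · rw [hi]; exact h0
        · have e1 : Function.update v z0 0 i = Function.update v' z0 0 i := congrFun hu i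
          rwa [Function.update_of_ne hi, Function.update_of_ne hi] at e1
  have hmain : S.ncard ≤ (D + 1) * (2 * H + 1) ^ (n - 1) := by
    have h1 : S.ncard = (φ '' S).ncard := (Set.ncard_image_of_injOn hinj).symm
    have h2 : (φ '' S).ncard ≤ (V0 ∪ V1).card := by
      rw [← Set.ncard_coe_finset]
      exact Set.ncard_le_ncard hsub (V0 ∪ V1).finite_toSet
    have h3 : (V0 ∪ V1).card ≤ V0.card + V1.card := Finset.card_union_le _ _
    have h4 : (D + 1) * (2 * H + 1) ^ (n - 1)
        = (2 * H + 1) ^ (n - 1) + D * (2 * H + 1) ^ (n - 1) := by ring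
    omega
  have hfinal : S.ncard ≤ (D + 1) * 3 ^ (n - 1) * H ^ (n - 1) := by
    refine hmain.trans ?_
    have h23 : 2 * H + 1 ≤ 3 * H := by omega
    calc (D + 1) * (2 * H + 1) ^ (n - 1) ≤ (D + 1) * (3 * H) ^ (n - 1) :=
          Nat.mul_le_mul_left _ (Nat.pow_le_pow_left h23 _)
      _ = (D + 1) * 3 ^ (n - 1) * H ^ (n - 1) := by rw [mul_pow, mul_assoc]
  calc (S.ncard : ℝ) ≤ ((D + 1) * 3 ^ (n - 1) * H ^ (n - 1) : ℕ) := by exact_mod_cast hfinal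
    _ = ((D : ℝ) + 1) * 3 ^ (n - 1) * (H : ℝ) ^ (n - 1) := by push_cast; ring
end

section
/- For every integer n ≥ 4 and H ≥ 2, the number of monic degenerate polynomials in ℤ[X] of degree n with all coefficients of absolute value at most H is at least ⌊H/2⌋^{n-2}. -/
open Polynomial

section aux

noncomputable def lowPart (m : ℕ) (c : ℕ → ℤ) : Polynomial ℤ :=
  ∑ i ∈ Finset.range m, C (c i) * X ^ i

lemma lowPart_coeff (m : ℕ) (c : ℕ → ℤ) (k : ℕ) :
    (lowPart m c).coeff k = if k < m then c k else 0 := by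
  simp [lowPart, Polynomial.finset_sum_coeff, Polynomial.coeff_C_mul,
    Polynomial.coeff_X_pow, Finset.sum_ite_eq' (Finset.range m) k c]

lemma lowPart_degree_lt (m : ℕ) (_hm : 0 < m) (c : ℕ → ℤ) :
    (lowPart m c).degree < (m : ℕ) := by
  apply lt_of_le_of_lt (Polynomial.degree_sum_le _ _)
  rw [Finset.sup_lt_iff (by exact_mod_cast WithBot.bot_lt_coe m)]
  intro i hi
  exact lt_of_le_of_lt (Polynomial.degree_C_mul_X_pow_le _ _)
    (by exact_mod_cast Finset.mem_range.mp hi)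

noncomputable def gpoly (m : ℕ) (c : ℕ → ℤ) : Polynomial ℤ :=
  X ^ m + lowPart m c

lemma gpoly_monic (m : ℕ) (hm : 0 < m) (c : ℕ → ℤ) : (gpoly m c).Monic := by
  apply (Polynomial.monic_X_pow m).add_of_left
  simpa using lowPart_degree_lt m hm c

lemma gpoly_natDegree (m : ℕ) (hm : 0 < m) (c : ℕ → ℤ) : (gpoly m c).natDegree = m := by
  have h := lowPart_degree_lt m hm c
  have : (gpoly m c).degree = (m : ℕ) := by
    rw [gpoly, Polynomial.degree_add_eq_left_of_degree_lt (by simpa using h),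
      Polynomial.degree_X_pow]
  exact Polynomial.natDegree_eq_of_degree_eq_some this

lemma gpoly_coeff (m : ℕ) (c : ℕ → ℤ) (k : ℕ) :
    (gpoly m c).coeff k = (if k = m then 1 else 0) + (if k < m then c k else 0) := by
  simp [gpoly, lowPart_coeff, Polynomial.coeff_X_pow]

lemma X_sq_add_one_monic : (X ^ 2 + 1 : Polynomial ℤ).Monic := by
  apply (Polynomial.monic_X_pow 2).add_of_left
  rw [Polynomial.degree_X_pow]
  exact lt_of_le_of_lt Polynomial.degree_one_le (by norm_num)

end aux

/-- For `n ≥ 4` and `H ≥ 2`, there are at least `⌊H/2⌋^{n-2}` monic degenerate integer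
polynomials of degree `n` with all coefficients of absolute value at most `H`. -/
theorem degenerate_monic_count_lower (n H : ℕ) (hn : 4 ≤ n) (hH : 2 ≤ H) :
    (H / 2) ^ (n - 2) ≤
      {f : Polynomial ℤ | f.Monic ∧ f.natDegree = n ∧ IsDegenerate f ∧
        ∀ i, |f.coeff i| ≤ (H : ℤ)}.ncard := by
  set m := n - 2 with hm
  have hm2 : 2 ≤ m := by omega
  have hm0 : 0 < m := by omega
  set S := {f : Polynomial ℤ | f.Monic ∧ f.natDegree = n ∧ IsDegenerate f ∧
        ∀ i, |f.coeff i| ≤ (H : ℤ)} with hS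
  -- the injection
  classical
  set cfun : (Fin m → Fin (H / 2)) → ℕ → ℤ :=
    fun b i => if h : i < m then ((b ⟨i, h⟩ : ℕ) : ℤ) else 0 with hcfun
  set F : (Fin m → Fin (H / 2)) → Polynomial ℤ :=
    fun b => (X ^ 2 + 1) * gpoly m (cfun b) with hF
  have hcoeffg : ∀ b k, 0 ≤ (gpoly m (cfun b)).coeff k ∧
      (gpoly m (cfun b)).coeff k ≤ (H / 2 : ℕ) := by
    intro b k
    rw [gpoly_coeff]
    have hb : ∀ h : k < m, ((b ⟨k, h⟩ : ℕ) : ℤ) ≤ (H / 2 : ℕ) := by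
      intro h
      exact_mod_cast le_of_lt (b ⟨k, h⟩).isLt
    have h1 : (1 : ℤ) ≤ (H / 2 : ℕ) := by
      have : 1 ≤ H / 2 := by omega
      exact_mod_cast this
    by_cases hkm : k = m
    · subst hkm
      rw [if_pos rfl, if_neg (lt_irrefl m)]
      exact ⟨by norm_num, by simpa using h1⟩
    · rw [if_neg hkm]
      by_cases hkl : k < m
      · rw [if_pos hkl]
        simp only [hcfun, dif_pos hkl, zero_add]
        exact ⟨by positivity, hb hkl⟩
      · rw [if_neg hkl]
        exact ⟨le_refl 0, by simpa using le_trans zero_le_one h1⟩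
  have hXsq_ne : (X ^ 2 + 1 : Polynomial ℤ) ≠ 0 := X_sq_add_one_monic.ne_zero
  have hFinj : Function.Injective F := by
    intro b b' hbb
    have hg : gpoly m (cfun b) = gpoly m (cfun b') := by
      exact mul_left_cancel₀ hXsq_ne hbb
    funext i
    have := congrArg (fun p => Polynomial.coeff p (i : ℕ)) hg
    simp only [gpoly_coeff, if_pos i.isLt] at this
    have hne : (i : ℕ) ≠ m := Nat.ne_of_lt i.isLt
    simp only [if_neg hne, hcfun, dif_pos i.isLt, zero_add] at this
    have : (b ⟨i, i.isLt⟩ : ℕ) = (b' ⟨i, i.isLt⟩ : ℕ) := by exact_mod_cast this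
    exact Fin.ext (by simpa using this)
  have hrange : Set.range F ⊆ S := by
    rintro f ⟨b, rfl⟩
    have hgm := gpoly_monic m hm0 (cfun b)
    refine ⟨X_sq_add_one_monic.mul hgm, ?_, ?_, ?_⟩
    · rw [hF]
      simp only
      rw [Polynomial.Monic.natDegree_mul X_sq_add_one_monic hgm,
        gpoly_natDegree m hm0]
      have : (X ^ 2 + 1 : Polynomial ℤ).natDegree = 2 := by
        compute_degree!
      omega
    · refine ⟨Complex.I, -Complex.I, ?_, ?_, ?_, 2, by norm_num, ?_⟩
      · simp [hF, Complex.I_sq]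
      · simp [hF, Complex.I_sq]
      · simp [Complex.I_ne_zero, neg_eq_iff_add_eq_zero]
        intro h
        have := Complex.I_ne_zero
        exact this (by linear_combination h / 2)
      · rw [div_pow]
        norm_num [Complex.I_sq]
    · intro i
      have hco : ((X ^ 2 + 1 : Polynomial ℤ) * gpoly m (cfun b)).coeff i =
          (if 2 ≤ i then (gpoly m (cfun b)).coeff (i - 2) else 0)
            + (gpoly m (cfun b)).coeff i := by
        have : (X ^ 2 + 1 : Polynomial ℤ) * gpoly m (cfun b)
            = gpoly m (cfun b) * X ^ 2 + gpoly m (cfun b) := by ring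
        rw [this, Polynomial.coeff_add, Polynomial.coeff_mul_X_pow']
      rw [hF]; simp only
      rw [hco]
      have h1 := hcoeffg b (i - 2)
      have h2 := hcoeffg b i
      have hHd : 2 * ((H / 2 : ℕ) : ℤ) ≤ (H : ℤ) := by
        have : 2 * (H / 2) ≤ H := by omega
        exact_mod_cast this
      rw [abs_le]
      constructor
      · split <;> nlinarith [h1.1, h2.1]
      · split <;> nlinarith [h1.2, h2.2]
  have hSfin : S.Finite := by
    have : Set.InjOn (fun f : Polynomial ℤ => fun i : Fin (n + 1) => f.coeff i) S := by
      intro f1 h1 f2 h2 hf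
      ext k
      by_cases hk : k ≤ n
      · exact congrFun hf ⟨k, by omega⟩
      · rw [Polynomial.coeff_eq_zero_of_natDegree_lt (by rw [h1.2.1]; omega),
          Polynomial.coeff_eq_zero_of_natDegree_lt (by rw [h2.2.1]; omega)]
    apply Set.Finite.of_finite_image _ this
    apply Set.Finite.subset (Set.Finite.pi (fun _ : Fin (n+1) => Set.finite_Icc (-(H:ℤ)) H))
    rintro _ ⟨f, hf, rfl⟩
    intro i _
    have := hf.2.2.2 i
    simp only [Set.mem_Icc]
    constructor <;> linarith [abs_le.mp this]
  calc (H / 2) ^ (n - 2) = (Set.range F).ncard := by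
        rw [← Nat.card_coe_set_eq, Nat.card_range_of_injective hFinj]
        simp [Nat.card_eq_fintype_card, hm]
    _ ≤ S.ncard := Set.ncard_le_ncard hrange hSfin
end

section
/- Let g, h ∈ ℤ[X] be monic irreducible non-degenerate quadratic polynomials such that f = g·h is degenerate. Write g(X) = X^2 + uX + v. Then h(X) = X^2 + wX ± v for some integer w; that is, the constant terms of g and h agree up to sign. -/
open Polynomial

lemma root_eq {R : Type*} [CommRing R] (g : Polynomial ℤ) (hgm : g.Monic) (hgd : g.natDegree = 2)
    (α : R) : Polynomial.aeval α g = α ^ 2 + (g.coeff 1 : R) * α + (g.coeff 0 : R) := by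
  have h2 : g.coeff 2 = 1 := by have := hgm.coeff_natDegree; rwa [hgd] at this
  rw [Polynomial.aeval_eq_sum_range, hgd]
  simp [Finset.sum_range_succ, h2, zsmul_eq_mul]
  ring

lemma prod_roots {u v z1 z2 : ℂ} (hne : z1 ≠ z2)
    (h1 : z1 ^ 2 + u * z1 + v = 0) (h2 : z2 ^ 2 + u * z2 + v = 0) : z1 * z2 = v := by
  have hsum : z1 + z2 + u = 0 := by
    have h3 : (z1 - z2) * (z1 + z2 + u) = 0 := by linear_combination h1 - h2
    rcases mul_eq_zero.mp h3 with h | h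
    · exact absurd (sub_eq_zero.mp h) hne
    · exact h
  linear_combination z1 * hsum - h1

lemma conj_root {u v : ℤ} {z : ℂ} (h : z ^ 2 + (u:ℂ) * z + (v:ℂ) = 0) :
    (starRingEnd ℂ) z ^ 2 + (u:ℂ) * (starRingEnd ℂ) z + (v:ℂ) = 0 := by
  have := congrArg (starRingEnd ℂ) h
  simpa using this

lemma not_rat_root (g : Polynomial ℤ) (hgm : g.Monic) (hgd : g.natDegree = 2)
    (hgirr : Irreducible (g.map (Int.castRingHom ℚ))) {α : ℂ}
    (hα : α ^ 2 + (g.coeff 1 : ℂ) * α + (g.coeff 0 : ℂ) = 0) (q : ℚ) : α ≠ (q : ℂ) := by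
  rintro rfl
  have hq : q ^ 2 + (g.coeff 1 : ℚ) * q + (g.coeff 0 : ℚ) = 0 := by exact_mod_cast hα
  set G := g.map (Int.castRingHom ℚ) with hG
  have hGd : G.natDegree = 2 := by rw [hG, hgm.natDegree_map]; exact hgd
  have hroot : G.IsRoot q := by
    have h1 : Polynomial.eval q G = Polynomial.aeval q g := by
      rw [hG, Polynomial.eval_map]; rfl
    have h2 := root_eq g hgm hgd q
    simp only [Polynomial.IsRoot, h1, h2, hq]
  obtain ⟨c, hc⟩ := Polynomial.dvd_iff_isRoot.mpr hroot
  rcases hgirr.isUnit_or_isUnit hc with hu | hu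
  · have := Polynomial.natDegree_eq_zero_of_isUnit hu
    simp [Polynomial.natDegree_X_sub_C] at this
  · have hc0 := Polynomial.natDegree_eq_zero_of_isUnit hu
    have hne : c ≠ 0 := hu.ne_zero
    have h2 : G.natDegree = (X - C q).natDegree + c.natDegree := by
      rw [hc]; exact Polynomial.natDegree_mul (Polynomial.X_sub_C_ne_zero q) hne
    rw [hGd, Polynomial.natDegree_X_sub_C, hc0] at h2
    omega

lemma key_lemma (g h : Polynomial ℤ)
    (hgm : g.Monic) (hgd : g.natDegree = 2)
    (hgirr : Irreducible (g.map (Int.castRingHom ℚ)))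
    (hhm : h.Monic) (hhd : h.natDegree = 2)
    (hhirr : Irreducible (h.map (Int.castRingHom ℚ)))
    (α β : ℂ) (hα : Polynomial.aeval α g = 0) (hβ : Polynomial.aeval β h = 0)
    (hne : α ≠ β) (k : ℕ) (hk : 0 < k) (hrt : (α / β) ^ k = 1) :
    h.coeff 0 = g.coeff 0 ∨ h.coeff 0 = -g.coeff 0 := by
  set u := g.coeff 1 with hu'
  set v := g.coeff 0 with hv'
  set w := h.coeff 1 with hw'
  set v' := h.coeff 0 with hv''
  have hβ0 : β ≠ 0 := by
    rintro rfl
    rw [div_zero, zero_pow hk.ne'] at hrt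
    exact zero_ne_one hrt
  have habs : ‖α‖ = ‖β‖ := by
    have h1 : ‖α / β‖ ^ k = 1 := by
      rw [← norm_pow, hrt, norm_one]
    have h2 : ‖α / β‖ = 1 := by
      rcases lt_trichotomy (‖α / β‖) 1 with hlt | heq | hgt
      · have := pow_lt_one₀ (norm_nonneg _) hlt hk.ne'
        rw [h1] at this; exact absurd this (lt_irrefl 1)
      · exact heq
      · have := one_lt_pow₀ hgt hk.ne'
        rw [h1] at this; exact absurd this (lt_irrefl 1)
    rw [norm_div] at h2
    exact (div_eq_one_iff_eq (norm_ne_zero_iff.mpr hβ0)).mp h2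
  have hnsq : Complex.normSq α = Complex.normSq β := by
    rw [← Complex.sq_norm, ← Complex.sq_norm, habs]
  have hαe : α ^ 2 + (u:ℂ) * α + (v:ℂ) = 0 := by
    rw [root_eq g hgm hgd α] at hα; exact hα
  have hβe : β ^ 2 + (w:ℂ) * β + (v':ℂ) = 0 := by
    rw [root_eq h hhm hhd β] at hβ; exact hβ
  by_cases hca : (starRingEnd ℂ) α = α
  · by_cases hcb : (starRingEnd ℂ) β = β
    · -- both real
      have hr : α = -β := by
        have hd : α / β = ((α / β).re : ℂ) :=
          (Complex.conj_eq_iff_re.mp (by rw [map_div₀, hca, hcb])).symm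
        have habs1 : |(α / β).re| = 1 := by
          have : ‖((α / β).re : ℂ)‖ = 1 := by
            rw [← hd, norm_div, habs, div_self (norm_ne_zero_iff.mpr hβ0)]
          rwa [Complex.norm_real, Real.norm_eq_abs] at this
        have heq : α = ((α / β).re : ℂ) * β := by
          rw [← hd, div_mul_cancel₀ _ hβ0]
        rcases abs_eq (by norm_num : (0:ℝ) ≤ 1) |>.mp habs1 with h1 | h1
        · rw [h1] at heq; simp at heq; exact absurd heq hne
        · rw [h1] at heq; push_cast at heq; rw [heq]; ring
      have hab : α + β = 0 := by rw [hr]; ring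
      have h4 : ((u:ℂ) + w) * α + ((v:ℂ) - v') = 0 := by
        linear_combination hαe - hβe - (α - β - w) * hab
      by_cases huw : u + w = 0
      · left
        have : (v:ℂ) - v' = 0 := by
          have hc : ((u:ℂ) + w) = 0 := by exact_mod_cast huw
          rw [hc, zero_mul, zero_add] at h4; exact h4
        have h6 : (v:ℂ) = v' := by linear_combination this
        exact_mod_cast h6.symm
      · exfalso
        have hc : ((u:ℂ) + w) ≠ 0 := by exact_mod_cast huw
        have : α = ((((v':ℚ) - v) / ((u:ℚ) + w) : ℚ) : ℂ) := by
          push_cast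
          rw [eq_div_iff hc]
          linear_combination h4
        exact not_rat_root g hgm hgd hgirr hαe _ this
    · -- α real, β not real
      have hβc := conj_root hβe
      have hneβ : β ≠ (starRingEnd ℂ) β := fun hh => hcb hh.symm
      have hpr : β * (starRingEnd ℂ) β = (v':ℂ) := prod_roots hneβ hβe hβc
      have hα2 : α ^ 2 = (v':ℂ) := by
        calc α ^ 2 = α * (starRingEnd ℂ) α := by rw [hca]; ring
        _ = (Complex.normSq α : ℂ) := Complex.mul_conj α
        _ = (Complex.normSq β : ℂ) := by rw [hnsq]
        _ = β * (starRingEnd ℂ) β := (Complex.mul_conj β).symm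
        _ = (v':ℂ) := hpr
      have h5 : (u:ℂ) * α + ((v:ℂ) + v') = 0 := by linear_combination hαe - hα2
      by_cases hu0 : u = 0
      · right
        have hc : (u:ℂ) = 0 := by exact_mod_cast hu0
        rw [hc, zero_mul, zero_add] at h5
        have : (v':ℂ) = -(v:ℂ) := by linear_combination h5
        exact_mod_cast this
      · exfalso
        have hc : (u:ℂ) ≠ 0 := by exact_mod_cast hu0
        have : α = (((-((v:ℚ) + v') / u : ℚ)) : ℂ) := by
          push_cast
          rw [eq_div_iff hc]
          linear_combination h5
        exact not_rat_root g hgm hgd hgirr hαe _ this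
  · by_cases hcb : (starRingEnd ℂ) β = β
    · -- β real, α not real
      have hαc := conj_root hαe
      have hneα : α ≠ (starRingEnd ℂ) α := fun hh => hca hh.symm
      have hpr : α * (starRingEnd ℂ) α = (v:ℂ) := prod_roots hneα hαe hαc
      have hβ2 : β ^ 2 = (v:ℂ) := by
        calc β ^ 2 = β * (starRingEnd ℂ) β := by rw [hcb]; ring
        _ = (Complex.normSq β : ℂ) := Complex.mul_conj β
        _ = (Complex.normSq α : ℂ) := by rw [hnsq]
        _ = α * (starRingEnd ℂ) α := (Complex.mul_conj α).symm
        _ = (v:ℂ) := hpr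
      have h5 : (w:ℂ) * β + ((v':ℂ) + v) = 0 := by linear_combination hβe - hβ2
      by_cases hw0 : w = 0
      · right
        have hc : (w:ℂ) = 0 := by exact_mod_cast hw0
        rw [hc, zero_mul, zero_add] at h5
        have : (v':ℂ) = -(v:ℂ) := by linear_combination h5
        exact_mod_cast this
      · exfalso
        have hc : (w:ℂ) ≠ 0 := by exact_mod_cast hw0
        have : β = (((-((v':ℚ) + v) / w : ℚ)) : ℂ) := by
          push_cast
          rw [eq_div_iff hc]
          linear_combination h5
        exact not_rat_root h hhm hhd hhirr hβe _ this
    · -- both non-real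
      left
      have hαc := conj_root hαe
      have hβc := conj_root hβe
      have hneα : α ≠ (starRingEnd ℂ) α := fun hh => hca hh.symm
      have hneβ : β ≠ (starRingEnd ℂ) β := fun hh => hcb hh.symm
      have hprα : α * (starRingEnd ℂ) α = (v:ℂ) := prod_roots hneα hαe hαc
      have hprβ : β * (starRingEnd ℂ) β = (v':ℂ) := prod_roots hneβ hβe hβc
      have : (v':ℂ) = (v:ℂ) := by
        rw [← hprα, ← hprβ, Complex.mul_conj, Complex.mul_conj, hnsq]
      exact_mod_cast this

/-- If `g, h ∈ ℤ[X]` are monic irreducible non-degenerate quadratics with `g·h`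
degenerate, then the constant terms of `g` and `h` agree up to sign. -/
theorem constant_terms_agree_up_to_sign (g h : Polynomial ℤ)
    (hgm : g.Monic) (hgd : g.natDegree = 2)
    (hgirr : Irreducible (g.map (Int.castRingHom ℚ))) (hgnd : ¬ IsDegenerate g)
    (hhm : h.Monic) (hhd : h.natDegree = 2)
    (hhirr : Irreducible (h.map (Int.castRingHom ℚ))) (hhnd : ¬ IsDegenerate h)
    (hdeg : IsDegenerate (g * h)) :
    h.coeff 0 = g.coeff 0 ∨ h.coeff 0 = -g.coeff 0 := by
  obtain ⟨α, β, hα, hβ, hne, k, hk, hrt⟩ := hdeg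
  rw [map_mul] at hα hβ
  have hα0 : α ≠ 0 := by
    rintro rfl
    rw [zero_div, zero_pow hk.ne'] at hrt
    exact zero_ne_one hrt
  have hβ0 : β ≠ 0 := by
    rintro rfl
    rw [div_zero, zero_pow hk.ne'] at hrt
    exact zero_ne_one hrt
  have hrt' : (β / α) ^ k = 1 := by
    rw [← inv_div, inv_pow, hrt, inv_one]
  rcases mul_eq_zero.mp hα with hαg | hαh <;> rcases mul_eq_zero.mp hβ with hβg | hβh
  · exact absurd ⟨α, β, hαg, hβg, hne, k, hk, hrt⟩ hgnd
  · exact key_lemma g h hgm hgd hgirr hhm hhd hhirr α β hαg hβh hne k hk hrt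
  · rcases key_lemma h g hhm hhd hhirr hgm hgd hgirr α β hαh hβg hne k hk hrt with h1 | h1
    · exact Or.inl h1.symm
    · right; omega
  · exact absurd ⟨α, β, hαh, hβh, hne, k, hk, hrt⟩ hhnd
end

section
/- For every integer H ≥ 1, the number of irreducible monic degenerate quadratic polynomials in ℤ[X] with coefficients bounded in absolute value by H equals 2H + ⌊√H⌋ + 2⌊√(H/2)⌋ + 2⌊√(H/3)⌋. -/
open Polynomial Finset
open scoped Classical

private lemma aeval_quad (a b : ℤ) (z : ℂ) :
    aeval z ((X : Polynomial ℤ) ^ 2 + C a * X + C b) = z ^ 2 + a * z + b := by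
  simp

private lemma irred_iff_no_root (a b : ℤ) :
    Irreducible ((X ^ 2 + C a * X + C b : Polynomial ℤ).map (Int.castRingHom ℚ)) ↔
      ∀ r : ℚ, r ^ 2 + a * r + b ≠ 0 := by
  have hmap : (X ^ 2 + C a * X + C b : Polynomial ℤ).map (Int.castRingHom ℚ)
      = X ^ 2 + C (a : ℚ) * X + C (b : ℚ) := by
    simp [Polynomial.map_add, Polynomial.map_mul, Polynomial.map_pow]
  have hdeg : (X ^ 2 + C (a : ℚ) * X + C (b : ℚ)).natDegree = 2 := by
    compute_degree!
  have hp0 : (X ^ 2 + C (a : ℚ) * X + C (b : ℚ)) ≠ 0 := by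
    intro h
    rw [h, natDegree_zero] at hdeg
    exact two_ne_zero hdeg.symm
  rw [hmap, irreducible_iff_roots_eq_zero_of_degree_le_three (by omega) (by omega),
    Multiset.eq_zero_iff_forall_notMem]
  constructor
  · intro h r hr
    exact h r (by rw [mem_roots hp0]; simpa [IsRoot] using hr)
  · intro h r hr
    rw [mem_roots hp0] at hr
    exact h r (by simpa [IsRoot] using hr)

private lemma exists_complex_root (a b : ℤ) : ∃ z : ℂ, z ^ 2 + a * z + b = 0 := by
  obtain ⟨s, hs⟩ := IsAlgClosed.exists_pow_nat_eq ((a : ℂ) ^ 2 - 4 * b) (n := 2) (by norm_num)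
  exact ⟨(-a + s) / 2, by linear_combination hs / 4⟩

private lemma isDegenerate_of (a b : ℤ) (k : ℕ) (hk : 0 < k)
    (h : ∀ α : ℂ, α ^ 2 + a * α + b = 0 →
      α ≠ -a - α ∧ (-a - α : ℂ) ≠ 0 ∧ α ^ k = (-a - α) ^ k) :
    IsDegenerate ((X : Polynomial ℤ) ^ 2 + C a * X + C b) := by
  obtain ⟨α, hα⟩ := exists_complex_root a b
  obtain ⟨hne, hb0, hpow⟩ := h α hα
  refine ⟨α, -a - α, by rw [aeval_quad]; exact hα, by rw [aeval_quad]; linear_combination hα,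
    hne, k, hk, ?_⟩
  rw [div_pow, hpow, div_self (pow_ne_zero _ hb0)]

private lemma degen_zero (b : ℤ) (hb : b ≠ 0) :
    IsDegenerate ((X : Polynomial ℤ) ^ 2 + C 0 * X + C b) := by
  apply isDegenerate_of 0 b 2 (by norm_num)
  intro α hα
  have hb' : (b : ℂ) ≠ 0 := by exact_mod_cast hb
  have hα0 : α ≠ 0 := by
    intro h; apply hb'; linear_combination hα - ((α + 0) * h)
  refine ⟨?_, ?_, by push_cast; ring⟩
  · intro h
    apply hα0
    have h2 : (2:ℂ) * α = 0 := by push_cast at h ⊢; linear_combination h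
    simpa using mul_eq_zero.mp h2
  · intro h
    apply hα0
    push_cast at h
    linear_combination -h

private lemma degen_one (c : ℤ) (hc : c ≠ 0) :
    IsDegenerate ((X : Polynomial ℤ) ^ 2 + C c * X + C (c^2)) := by
  apply isDegenerate_of c (c^2) 3 (by norm_num)
  intro α hα
  push_cast at hα
  have hc' : (c : ℂ) ≠ 0 := by exact_mod_cast hc
  have hc2 : ((c:ℂ))^2 ≠ 0 := pow_ne_zero _ hc'
  refine ⟨?_, ?_, ?_⟩
  · intro h
    push_cast at h
    apply hc2
    have h2 : α = -(c:ℂ)/2 := by linear_combination h/2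
    rw [h2] at hα
    linear_combination (4/3 : ℂ) * hα
  · intro h
    apply hc2
    have h2 : α = -(c:ℂ) := by linear_combination -h
    rw [h2] at hα
    linear_combination hα
  · push_cast
    linear_combination (2*α + (c:ℂ)) * hα

private lemma degen_two (c : ℤ) (hc : c ≠ 0) :
    IsDegenerate ((X : Polynomial ℤ) ^ 2 + C (2*c) * X + C (2*c^2)) := by
  apply isDegenerate_of (2*c) (2*c^2) 4 (by norm_num)
  intro α hα
  push_cast at hα
  have hc' : (c : ℂ) ≠ 0 := by exact_mod_cast hc
  have hc2 : ((c:ℂ))^2 ≠ 0 := pow_ne_zero _ hc'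
  refine ⟨?_, ?_, ?_⟩
  · intro h
    push_cast at h
    apply hc2
    have h2 : α = -(c:ℂ) := by linear_combination h/2
    rw [h2] at hα
    linear_combination hα
  · intro h
    push_cast at h
    apply hc2
    have h2 : α = -2*(c:ℂ) := by linear_combination -h
    rw [h2] at hα
    linear_combination hα/2
  · push_cast
    linear_combination (-8*(c:ℂ)*(α + (c:ℂ))) * hα

private lemma degen_three (c : ℤ) (hc : c ≠ 0) :
    IsDegenerate ((X : Polynomial ℤ) ^ 2 + C (3*c) * X + C (3*c^2)) := by
  apply isDegenerate_of (3*c) (3*c^2) 6 (by norm_num)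
  intro α hα
  push_cast at hα
  have hc' : (c : ℂ) ≠ 0 := by exact_mod_cast hc
  have hc2 : ((c:ℂ))^2 ≠ 0 := pow_ne_zero _ hc'
  refine ⟨?_, ?_, ?_⟩
  · intro h
    push_cast at h
    apply hc2
    have h2 : α = -3*(c:ℂ)/2 := by linear_combination h/2
    rw [h2] at hα
    linear_combination (4/3 : ℂ) * hα
  · intro h
    push_cast at h
    apply hc2
    have h2 : α = -3*(c:ℂ) := by linear_combination -h
    rw [h2] at hα
    linear_combination hα/3
  · push_cast
    have h3 : α^3 + (-(3*(c:ℂ)) - α)^3 = 0 := by linear_combination (-9*(c:ℂ)) * hα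
    linear_combination (α^3 - (-(3*(c:ℂ)) - α)^3) * h3

private lemma rat_int_of_integral {q : ℚ} (h : IsIntegral ℤ ((q : ℂ))) : ∃ n : ℤ, (n:ℚ) = q := by
  have h1 : (algebraMap ℚ ℂ) q = (q : ℂ) := by
    simp [eq_ratCast]
  rw [← h1] at h
  have h2 : IsIntegral ℤ q :=
    (isIntegral_algebraMap_iff ((algebraMap ℚ ℂ).injective)).mp h
  obtain ⟨n, hn⟩ := IsIntegrallyClosed.isIntegral_iff.mp h2
  exact ⟨n, by exact_mod_cast hn⟩

private lemma int_of_rat_sq {b : ℤ} {r : ℚ} (h : r ^ 2 = (b : ℚ)) : ∃ n : ℤ, n * n = b := by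
  have hint : IsIntegral ℤ r := by
    refine ⟨X ^ 2 - C b, monic_X_pow_sub_C _ two_ne_zero, ?_⟩
    have : (aeval r) (X ^ 2 - C b : Polynomial ℤ) = r ^ 2 - b := by simp
    simpa [Polynomial.eval₂_eq_eval_map, ← Polynomial.aeval_def, this, h]
  obtain ⟨n, hn⟩ := IsIntegrallyClosed.isIntegral_iff.mp hint
  refine ⟨n, ?_⟩
  have : ((n:ℚ)) ^ 2 = (b:ℚ) := by rw [show ((n:ℚ)) = r from by exact_mod_cast hn, h]
  exact_mod_cast (by linarith [sq_abs ((n:ℚ))] : ((n:ℚ)) * n = b)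

private lemma classify (a b : ℤ) (hb : b ≠ 0)
    (hdeg : IsDegenerate ((X : Polynomial ℤ) ^ 2 + C a * X + C b)) :
    ∃ n : ℤ, -2 ≤ n ∧ n ≤ 1 ∧ a ^ 2 - 2 * b = n * b := by
  obtain ⟨α, β, hα, hβ, hne, k, hk, hζ⟩ := hdeg
  rw [aeval_quad] at hα hβ
  have hbc : (b : ℂ) ≠ 0 := by exact_mod_cast hb
  have h1 : (α - β) * (α + β + a) = 0 := by linear_combination hα - hβ
  have hβval : β = -a - α := by
    rcases mul_eq_zero.mp h1 with h | h
    · exact absurd (sub_eq_zero.mp h) hne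
    · linear_combination h
  subst hβval
  have hprod : α * (-(a:ℂ) - α) = b := by linear_combination -hα
  have hα0 : α ≠ 0 := by
    intro h; apply hbc; rw [h] at hprod; linear_combination -hprod
  have hβ0 : (-(a:ℂ) - α) ≠ 0 := by
    intro h; apply hbc; rw [h] at hprod; linear_combination -hprod
  set ζ : ℂ := α / (-(a:ℂ) - α) with hζdef
  have hζ0 : ζ ≠ 0 := div_ne_zero hα0 hβ0
  have habs : ‖ζ‖ = 1 := by
    have h2 : ‖ζ‖ ^ k = 1 := by rw [← norm_pow, hζ, norm_one]
    rcases (pow_eq_one_iff_cases.mp h2) with h | h | h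
    · omega
    · exact h
    · exfalso; nlinarith [norm_nonneg ζ, h.1]
  have hss : α ^ 2 + (-(a:ℂ) - α) ^ 2 = (a:ℂ) ^ 2 - 2 * b := by linear_combination 2 * hα
  set q : ℚ := ((a:ℚ) ^ 2 - 2 * (b:ℚ)) / (b:ℚ) with hqdef
  have hq : ζ + ζ⁻¹ = (q : ℂ) := by
    rw [hζdef, inv_div, div_add_div _ _ hβ0 hα0, hqdef]
    push_cast
    rw [div_eq_div_iff (by exact mul_ne_zero hβ0 hα0) hbc]
    linear_combination ((a:ℂ)^2) * hα
  have hζint : IsIntegral ℤ ζ := by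
    refine ⟨X ^ k - C 1, monic_X_pow_sub_C _ hk.ne', ?_⟩
    simp [hζ]
  have hinv : ζ⁻¹ = ζ ^ (k - 1) := by
    apply inv_eq_of_mul_eq_one_right
    rw [← pow_succ']
    rw [Nat.sub_add_cancel hk]
    exact hζ
  have hsum_int : IsIntegral ℤ (ζ + ζ⁻¹) := hζint.add (hinv ▸ hζint.pow (k-1))
  rw [hq] at hsum_int
  obtain ⟨n, hn⟩ := rat_int_of_integral (by exact_mod_cast hsum_int)
  have hbq : ((b:ℚ)) ≠ 0 := by exact_mod_cast hb
  have hval : a ^ 2 - 2 * b = n * b := by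
    have h4 : ((n : ℚ)) * b = (a:ℚ)^2 - 2*(b:ℚ) := by
      rw [hn, hqdef, div_mul_cancel₀ _ hbq]
    exact_mod_cast h4.symm
  have hconj : ζ⁻¹ = (starRingEnd ℂ) ζ := Complex.inv_eq_conj habs
  have hre : ((n : ℝ) : ℂ) = 2 * ζ.re := by
    have h3 : ((n:ℚ) : ℂ) = ζ + ζ⁻¹ := by
      rw [hq, hn]
    rw [hconj, Complex.add_conj] at h3
    push_cast at h3 ⊢
    rw [h3]
  have hre' : (n : ℝ) = 2 * ζ.re := by exact_mod_cast hre
  have habs_re : |ζ.re| ≤ 1 := by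
    have := Complex.abs_re_le_norm ζ
    rwa [habs] at this
  have hge : -2 ≤ n := by
    have : (-2 : ℝ) ≤ (n : ℝ) := by rw [hre']; cases abs_le.mp habs_re; linarith
    exact_mod_cast this
  have hle : n ≤ 2 := by
    have : (n : ℝ) ≤ 2 := by rw [hre']; cases abs_le.mp habs_re; linarith
    exact_mod_cast this
  have hne2 : n ≠ 2 := by
    intro h2
    rw [h2] at hre'
    have hre1 : ζ.re = 1 := by norm_num at hre'; linarith
    have hnsq : Complex.normSq ζ = 1 := by
      rw [← Complex.sq_norm, habs]; norm_num
    have him : ζ.im = 0 := by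
      rw [Complex.normSq_apply, hre1] at hnsq
      nlinarith
    have hζ1 : ζ = 1 := Complex.ext (by simp [hre1]) (by simp [him])
    rw [hζdef, div_eq_one_iff_eq hβ0] at hζ1
    exact hne hζ1
  exact ⟨n, hge, by omega, hval⟩

set_option maxHeartbeats 2000000 in
/-- The number of irreducible monic degenerate quadratics `X² + aX + b ∈ ℤ[X]` with
`|a|, |b| ≤ H` equals `2H + ⌊√H⌋ + 2⌊√(H/2)⌋ + 2⌊√(H/3)⌋`. -/
theorem count_irreducible_degenerate_quadratic (H : ℕ) (hH : 1 ≤ H) :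
    ((Finset.Icc (-(H : ℤ)) H ×ˢ Finset.Icc (-(H : ℤ)) H).filter fun p =>
      Irreducible ((X ^ 2 + C p.1 * X + C p.2 : Polynomial ℤ).map (Int.castRingHom ℚ)) ∧
      IsDegenerate (X ^ 2 + C p.1 * X + C p.2)).card =
    2 * H + Nat.sqrt H + 2 * Nat.sqrt (H / 2) + 2 * Nat.sqrt (H / 3) := by
  classical
  set s1 := Nat.sqrt H with hs1
  set s2 := Nat.sqrt (H / 2) with hs2
  set s3 := Nat.sqrt (H / 3) with hs3
  set E1 : Finset (ℤ × ℤ) :=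
    ((Finset.Icc (-(H:ℤ)) H).filter fun b => b ≠ 0 ∧ ¬∃ r : ℤ, r * r = -b).image
      fun b => ((0:ℤ), b) with hE1
  set E2 : Finset (ℤ × ℤ) :=
    ((Finset.Icc (-(s1:ℤ)) s1).erase 0).image fun c => (c, c^2) with hE2
  set E3 : Finset (ℤ × ℤ) :=
    ((Finset.Icc (-(s2:ℤ)) s2).erase 0).image fun c => (2*c, 2*c^2) with hE3
  set E4 : Finset (ℤ × ℤ) :=
    ((Finset.Icc (-(s3:ℤ)) s3).erase 0).image fun c => (3*c, 3*c^2) with hE4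
  -- basic sqrt facts
  have hs1H : s1 * s1 ≤ H := Nat.sqrt_le H
  have hs2H : 2 * (s2 * s2) ≤ H := by
    have h := Nat.sqrt_le (H / 2)
    rw [← hs2] at h
    omega
  have hs3H : 3 * (s3 * s3) ≤ H := by
    have h := Nat.sqrt_le (H / 3)
    rw [← hs3] at h
    omega
  have hs1le : s1 ≤ H := Nat.sqrt_le_self H
  -- the set equality
  have hset : ((Finset.Icc (-(H : ℤ)) H ×ˢ Finset.Icc (-(H : ℤ)) H).filter fun p =>
      Irreducible ((X ^ 2 + C p.1 * X + C p.2 : Polynomial ℤ).map (Int.castRingHom ℚ)) ∧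
      IsDegenerate (X ^ 2 + C p.1 * X + C p.2)) = E1 ∪ E2 ∪ E3 ∪ E4 := by
    ext ⟨a, b⟩
    simp only [mem_filter, mem_product, mem_Icc, mem_union]
    constructor
    · rintro ⟨⟨⟨ha1, ha2⟩, hb1, hb2⟩, hirr, hdeg⟩
      rw [irred_iff_no_root] at hirr
      have hb0 : b ≠ 0 := by
        intro h
        exact hirr 0 (by rw [h]; push_cast; ring)
      obtain ⟨n, hn1, hn2, hval⟩ := classify a b hb0 hdeg
      interval_cases n
      · -- a = 0
        have ha0 : a = 0 := by
          have h9 : a ^ 2 = 0 := by linarith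
          exact pow_eq_zero_iff (two_ne_zero) |>.mp h9
        left; left; left
        rw [hE1, mem_image]
        refine ⟨b, ?_, by rw [ha0]⟩
        rw [mem_filter, mem_Icc]
        refine ⟨⟨hb1, hb2⟩, hb0, ?_⟩
        rintro ⟨r, hr⟩
        apply hirr r
        rw [ha0]
        push_cast
        have h9 : ((r:ℚ)) * r = -(b:ℚ) := by exact_mod_cast hr
        linear_combination h9
      · -- b = a^2
        have hba : b = a ^ 2 := by linarith
        have ha0 : a ≠ 0 := by
          intro h; rw [h] at hba; simp at hba; exact hb0 hba
        left; left; right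
        rw [hE2, mem_image]
        have hnat : a.natAbs * a.natAbs ≤ H := by
          have key : (↑(a.natAbs * a.natAbs) : ℤ) = a * a := Int.natAbs_mul_self
          have h5 : (↑(a.natAbs * a.natAbs) : ℤ) ≤ (H:ℤ) := by rw [key]; nlinarith
          exact_mod_cast h5
        have h6 : a.natAbs ≤ s1 := Nat.le_sqrt.mpr hnat
        refine ⟨a, ?_, by rw [← hba]⟩
        rw [mem_erase, mem_Icc]
        omega
      · -- 2b = a^2
        have hba : a ^ 2 = 2 * b := by linarith
        have ha0 : a ≠ 0 := by
          intro h; rw [h] at hba; simp at hba; omega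
        have heven : Even a := by
          have haa : Even (a * a) := ⟨b, by linear_combination hba⟩
          rcases Int.even_mul.mp haa with h | h <;> exact h
        obtain ⟨c, hcc⟩ := heven
        have hac : a = 2 * c := by omega
        rw [hac] at hba
        have hbc : b = 2 * c ^ 2 := by nlinarith
        have hc0 : c ≠ 0 := by intro h; rw [h] at hac; omega
        left; right
        rw [hE3, mem_image]
        have hnat : 2 * (c.natAbs * c.natAbs) ≤ H := by
          have key : (↑(c.natAbs * c.natAbs) : ℤ) = c * c := Int.natAbs_mul_self
          have h5 : ((2:ℤ) * (↑(c.natAbs * c.natAbs))) ≤ (H:ℤ) := by rw [key]; nlinarith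
          exact_mod_cast h5
        have h6 : c.natAbs ≤ s2 := by
          rw [hs2, Nat.le_sqrt]
          omega
        refine ⟨c, ?_, by rw [← hac, ← hbc]⟩
        rw [mem_erase, mem_Icc]
        omega
      · -- 3b = a^2
        have hba : a ^ 2 = 3 * b := by linarith
        have ha0 : a ≠ 0 := by
          intro h; rw [h] at hba; simp at hba; omega
        have hdvd : (3:ℤ) ∣ a := by
          have h3 : (3:ℤ) ∣ a * a := ⟨b, by linear_combination hba⟩
          rcases (Int.prime_three.dvd_mul.mp h3) with h | h <;> exact h
        obtain ⟨c, hac⟩ := hdvd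
        rw [hac] at hba
        have hbc : b = 3 * c ^ 2 := by nlinarith
        have hc0 : c ≠ 0 := by intro h; rw [h] at hac; omega
        right
        rw [hE4, mem_image]
        have hnat : 3 * (c.natAbs * c.natAbs) ≤ H := by
          have key : (↑(c.natAbs * c.natAbs) : ℤ) = c * c := Int.natAbs_mul_self
          have h5 : ((3:ℤ) * (↑(c.natAbs * c.natAbs))) ≤ (H:ℤ) := by rw [key]; nlinarith
          exact_mod_cast h5
        have h6 : c.natAbs ≤ s3 := by
          rw [hs3, Nat.le_sqrt]
          omega
        refine ⟨c, ?_, by rw [← hac, ← hbc]⟩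
        rw [mem_erase, mem_Icc]
        omega
    · have hHpos : (0:ℤ) ≤ (H:ℤ) := by positivity
      rintro (((h | h) | h) | h)
      · -- E1
        rw [hE1, mem_image] at h
        obtain ⟨b', hb', heq⟩ := h
        rw [mem_filter, mem_Icc] at hb'
        obtain ⟨⟨hb1, hb2⟩, hb0, hnsq⟩ := hb'
        injection heq with h1 h2
        subst h1; subst h2
        refine ⟨⟨⟨by omega, by omega⟩, hb1, hb2⟩, ?_, degen_zero _ hb0⟩
        rw [irred_iff_no_root]
        intro r hr
        push_cast at hr
        have hr2 : r ^ 2 = ((-b' : ℤ) : ℚ) := by push_cast; linarith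
        obtain ⟨m, hm⟩ := int_of_rat_sq hr2
        exact hnsq ⟨m, hm⟩
      · -- E2
        rw [hE2, mem_image] at h
        obtain ⟨c, hc', heq⟩ := h
        rw [mem_erase, mem_Icc] at hc'
        obtain ⟨hc0, hcl, hcu⟩ := hc'
        injection heq with h1 h2
        subst h1; subst h2
        have hnat : c.natAbs * c.natAbs ≤ H := Nat.le_sqrt.mp (by omega)
        have hcsq : c ^ 2 = (↑(c.natAbs * c.natAbs) : ℤ) := by
          rw [Int.natAbs_mul_self]; ring
        have hc2H : c ^ 2 ≤ (H:ℤ) := by rw [hcsq]; exact_mod_cast hnat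
        have hna1 : 1 ≤ c.natAbs := by omega
        have hle : c.natAbs ≤ c.natAbs * c.natAbs := by nlinarith
        refine ⟨⟨⟨by omega, by omega⟩, by nlinarith [sq_nonneg c], hc2H⟩, ?_, degen_one c hc0⟩
        rw [irred_iff_no_root]
        intro r hr
        push_cast at hr
        have hcq : ((c:ℚ)) ≠ 0 := by exact_mod_cast hc0
        nlinarith [sq_nonneg (2*r + (c:ℚ)), mul_self_pos.mpr hcq]
      · -- E3
        rw [hE3, mem_image] at h
        obtain ⟨c, hc', heq⟩ := h
        rw [mem_erase, mem_Icc] at hc'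
        obtain ⟨hc0, hcl, hcu⟩ := hc'
        injection heq with h1 h2
        subst h1; subst h2
        have hnat : c.natAbs * c.natAbs ≤ H / 2 := Nat.le_sqrt.mp (by omega)
        have hcsq : c ^ 2 = (↑(c.natAbs * c.natAbs) : ℤ) := by
          rw [Int.natAbs_mul_self]; ring
        have hc2H : 2 * c ^ 2 ≤ (H:ℤ) := by
          rw [hcsq]
          have h7 : (2 * (c.natAbs * c.natAbs) : ℕ) ≤ H := by omega
          exact_mod_cast h7
        have hna1 : 1 ≤ c.natAbs := by omega
        have hle : c.natAbs ≤ c.natAbs * c.natAbs := by nlinarith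
        refine ⟨⟨⟨by omega, by omega⟩, by nlinarith [sq_nonneg c], hc2H⟩, ?_, degen_two c hc0⟩
        rw [irred_iff_no_root]
        intro r hr
        push_cast at hr
        have hcq : ((c:ℚ)) ≠ 0 := by exact_mod_cast hc0
        nlinarith [sq_nonneg (r + (c:ℚ)), mul_self_pos.mpr hcq]
      · -- E4
        rw [hE4, mem_image] at h
        obtain ⟨c, hc', heq⟩ := h
        rw [mem_erase, mem_Icc] at hc'
        obtain ⟨hc0, hcl, hcu⟩ := hc'
        injection heq with h1 h2
        subst h1; subst h2
        have hnat : c.natAbs * c.natAbs ≤ H / 3 := Nat.le_sqrt.mp (by omega)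
        have hcsq : c ^ 2 = (↑(c.natAbs * c.natAbs) : ℤ) := by
          rw [Int.natAbs_mul_self]; ring
        have hc2H : 3 * c ^ 2 ≤ (H:ℤ) := by
          rw [hcsq]
          have h7 : (3 * (c.natAbs * c.natAbs) : ℕ) ≤ H := by omega
          exact_mod_cast h7
        have hna1 : 1 ≤ c.natAbs := by omega
        have hle : c.natAbs ≤ c.natAbs * c.natAbs := by nlinarith
        refine ⟨⟨⟨by omega, by omega⟩, by nlinarith [sq_nonneg c], hc2H⟩, ?_, degen_three c hc0⟩
        rw [irred_iff_no_root]
        intro r hr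
        push_cast at hr
        have hcq : ((c:ℚ)) ≠ 0 := by exact_mod_cast hc0
        nlinarith [sq_nonneg (2*r + 3*(c:ℚ)), mul_self_pos.mpr hcq]
  -- cardinalities
  have hcard1 : E1.card = 2 * H - s1 := by
    rw [hE1, card_image_of_injective _ (fun x y h => by injection h)]
    have hbadsub : insert (0:ℤ) ((Finset.Icc (1:ℤ) s1).image fun k => -(k*k)) ⊆
        Finset.Icc (-(H:ℤ)) H := by
      intro x hx
      rw [mem_insert] at hx
      rw [mem_Icc]
      rcases hx with rfl | hx
      · constructor <;> omega
      · rw [mem_image] at hx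
        obtain ⟨k, hk, rfl⟩ := hx
        rw [mem_Icc] at hk
        have h9 : k * k ≤ (H:ℤ) := by
          have h7 : k * k ≤ (s1:ℤ) * s1 := by nlinarith [hk.1, hk.2]
          have h8 : ((s1:ℤ)) * s1 ≤ (H:ℤ) := by exact_mod_cast hs1H
          linarith
        constructor <;> nlinarith [hk.1]
    have hfeq : (Finset.Icc (-(H:ℤ)) H).filter (fun b => b ≠ 0 ∧ ¬∃ r : ℤ, r * r = -b)
        = Finset.Icc (-(H:ℤ)) H \ insert (0:ℤ) ((Finset.Icc (1:ℤ) s1).image fun k => -(k*k)) := by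
      ext x
      constructor
      · rintro hx
        rw [mem_filter] at hx
        obtain ⟨hxI, hx0, hnsq⟩ := hx
        rw [mem_sdiff]
        refine ⟨hxI, fun hmem => ?_⟩
        rw [mem_insert] at hmem
        rcases hmem with rfl | hmem
        · exact hx0 rfl
        · rw [mem_image] at hmem
          obtain ⟨k, hk, hkx⟩ := hmem
          exact hnsq ⟨k, by omega⟩
      · intro hmem
        rw [mem_sdiff, mem_insert] at hmem
        obtain ⟨hxI, hbad⟩ := hmem
        push_neg at hbad
        obtain ⟨hx0, hbad2⟩ := hbad
        rw [mem_image] at hbad2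
        push_neg at hbad2
        rw [mem_filter]
        refine ⟨hxI, hx0, ?_⟩
        rintro ⟨r, hr⟩
        rw [mem_Icc] at hxI
        have key : (↑(r.natAbs * r.natAbs) : ℤ) = r * r := Int.natAbs_mul_self
        have hna : r.natAbs * r.natAbs ≤ H := by
          have h5 : (↑(r.natAbs * r.natAbs) : ℤ) ≤ (H:ℤ) := by rw [key]; omega
          exact_mod_cast h5
        have h6 : r.natAbs ≤ s1 := Nat.le_sqrt.mpr hna
        have hr0 : r ≠ 0 := by rintro rfl; simp at hr; exact hx0 (by omega)
        apply hbad2 ((r.natAbs : ℤ)) (mem_Icc.mpr ⟨by omega, by exact_mod_cast h6⟩)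
        have key2 : ((r.natAbs : ℤ)) * (r.natAbs : ℤ) = r * r := by exact_mod_cast key
        rw [key2]
        omega
    rw [hfeq, card_sdiff_of_subset hbadsub]
    have hcardIcc : (Finset.Icc (-(H:ℤ)) H).card = 2*H + 1 := by
      rw [Int.card_Icc]; omega
    have hcardbad : (insert (0:ℤ) ((Finset.Icc (1:ℤ) s1).image fun k => -(k*k))).card
        = s1 + 1 := by
      rw [card_insert_of_notMem, card_image_of_injOn, Int.card_Icc]
      · omega
      · intro x hx y hy hxy
        rw [Finset.mem_coe, mem_Icc] at hx hy
        simp only [neg_inj] at hxy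
        nlinarith [hx.1, hy.1]
      · rw [mem_image]
        rintro ⟨k, hk, hk0⟩
        rw [mem_Icc] at hk
        nlinarith [hk.1]
    rw [hcardIcc, hcardbad]
    omega
  have h0mem2 : (0:ℤ) ∈ Finset.Icc (-(s1:ℤ)) s1 := mem_Icc.mpr ⟨by omega, by omega⟩
  have h0mem3 : (0:ℤ) ∈ Finset.Icc (-(s2:ℤ)) s2 := mem_Icc.mpr ⟨by omega, by omega⟩
  have h0mem4 : (0:ℤ) ∈ Finset.Icc (-(s3:ℤ)) s3 := mem_Icc.mpr ⟨by omega, by omega⟩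
  have hcard2 : E2.card = 2 * s1 := by
    rw [hE2, card_image_of_injective _
      (fun x y h => by have := congrArg Prod.fst h; simpa using this),
      card_erase_of_mem h0mem2, Int.card_Icc]
    omega
  have hcard3 : E3.card = 2 * s2 := by
    rw [hE3, card_image_of_injective _
      (fun x y h => by have h1 := congrArg Prod.fst h; simp at h1; omega),
      card_erase_of_mem h0mem3, Int.card_Icc]
    omega
  have hcard4 : E4.card = 2 * s3 := by
    rw [hE4, card_image_of_injective _
      (fun x y h => by have h1 := congrArg Prod.fst h; simp at h1; omega),
      card_erase_of_mem h0mem4, Int.card_Icc]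
    omega
  -- disjointness
  have hd12 : Disjoint E1 E2 := by
    rw [Finset.disjoint_left]
    rintro p hp1 hp2
    rw [hE1, mem_image] at hp1
    rw [hE2, mem_image] at hp2
    obtain ⟨b', _, rfl⟩ := hp1
    obtain ⟨c, hc, heq⟩ := hp2
    rw [mem_erase] at hc
    injection heq with h1 h2
    exact hc.1 h1
  have hd13 : Disjoint E1 E3 := by
    rw [Finset.disjoint_left]
    rintro p hp1 hp2
    rw [hE1, mem_image] at hp1
    rw [hE3, mem_image] at hp2
    obtain ⟨b', _, rfl⟩ := hp1
    obtain ⟨c, hc, heq⟩ := hp2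
    rw [mem_erase] at hc
    injection heq with h1 h2
    exact hc.1 (by omega)
  have hd14 : Disjoint E1 E4 := by
    rw [Finset.disjoint_left]
    rintro p hp1 hp2
    rw [hE1, mem_image] at hp1
    rw [hE4, mem_image] at hp2
    obtain ⟨b', _, rfl⟩ := hp1
    obtain ⟨c, hc, heq⟩ := hp2
    rw [mem_erase] at hc
    injection heq with h1 h2
    exact hc.1 (by omega)
  have hd23 : Disjoint E2 E3 := by
    rw [Finset.disjoint_left]
    rintro p hp1 hp2
    rw [hE2, mem_image] at hp1
    rw [hE3, mem_image] at hp2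
    obtain ⟨c, hc, rfl⟩ := hp1
    obtain ⟨d, hd, heq⟩ := hp2
    rw [mem_erase] at hc hd
    injection heq with h1 h2
    have h4 : (2*d) ^ 2 = c ^ 2 := by rw [h1]
    have h5 : 4 * d ^ 2 = c ^ 2 := by linear_combination h4
    have h3 : d ^ 2 = 0 := by linarith
    exact hd.1 (pow_eq_zero_iff two_ne_zero |>.mp h3)
  have hd24 : Disjoint E2 E4 := by
    rw [Finset.disjoint_left]
    rintro p hp1 hp2
    rw [hE2, mem_image] at hp1
    rw [hE4, mem_image] at hp2
    obtain ⟨c, hc, rfl⟩ := hp1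
    obtain ⟨d, hd, heq⟩ := hp2
    rw [mem_erase] at hc hd
    injection heq with h1 h2
    have h4 : (3*d) ^ 2 = c ^ 2 := by rw [h1]
    have h5 : 9 * d ^ 2 = c ^ 2 := by linear_combination h4
    have h3 : d ^ 2 = 0 := by linarith
    exact hd.1 (pow_eq_zero_iff two_ne_zero |>.mp h3)
  have hd34 : Disjoint E3 E4 := by
    rw [Finset.disjoint_left]
    rintro p hp1 hp2
    rw [hE3, mem_image] at hp1
    rw [hE4, mem_image] at hp2
    obtain ⟨c, hc, rfl⟩ := hp1
    obtain ⟨d, hd, heq⟩ := hp2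
    rw [mem_erase] at hc hd
    injection heq with h1 h2
    have h4 : (3*d) * (3*d) = (2*c) * (2*c) := by rw [show (3:ℤ)*d = 2*c from by omega]
    have h5 : 9 * d ^ 2 = 4 * c ^ 2 := by nlinarith
    have h6 : c ^ 2 = 0 := by nlinarith
    exact hc.1 (pow_eq_zero_iff two_ne_zero |>.mp h6)
  rw [hset,
    card_union_of_disjoint (by
      rw [Finset.disjoint_union_left, Finset.disjoint_union_left]
      exact ⟨⟨hd14, hd24⟩, hd34⟩),
    card_union_of_disjoint (by
      rw [Finset.disjoint_union_left]
      exact ⟨hd13, hd23⟩),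
    card_union_of_disjoint hd12,
    hcard1, hcard2, hcard3, hcard4]
  omega
end

section
/- An irreducible monic quadratic polynomial f ∈ ℤ[X] has two roots whose quotient is a primitive fourth root of unity (±i) if and only if f(X) = X^2 + 2aX + 2a^2 for some nonzero integer a. -/
open Polynomial

private lemma key_eq {b c β ε : ℂ} (hβ : β ≠ 0) (hε : ε ^ 2 = -1)
    (h1 : β ^ 2 + b * β + c = 0) (h2 : (ε * β) ^ 2 + b * (ε * β) + c = 0) :
    b ^ 2 = 2 * c := by
  have h3 : β * (2 * β - b * (ε - 1)) = 0 := by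
    linear_combination h1 - h2 + β ^ 2 * hε
  have h4 : β = b * (ε - 1) / 2 := by
    rcases mul_eq_zero.mp h3 with h | h
    · exact absurd h hβ
    · field_simp
      linear_combination h
  subst h4
  linear_combination (-2) * h1 + (b ^ 2 / 2) * hε

private lemma coeff_intCast' (m : ℤ) (n : ℕ) :
    ((m : ℤ[X])).coeff n = if n = 0 then m else 0 := by
  rw [← Polynomial.C_eq_intCast]; exact Polynomial.coeff_C

/-- An irreducible monic quadratic `f ∈ ℤ[X]` has two roots whose quotient is `±i` iff
`f(X) = X² + 2aX + 2a²` for some nonzero integer `a`. -/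
theorem quotient_fourth_root_iff (f : Polynomial ℤ) (hm : f.Monic) (hdeg : f.natDegree = 2)
    (hirr : Irreducible (f.map (Int.castRingHom ℚ))) :
    (∃ α β : ℂ, Polynomial.aeval α f = 0 ∧ Polynomial.aeval β f = 0 ∧
      (α / β = Complex.I ∨ α / β = -Complex.I)) ↔
    ∃ a : ℤ, a ≠ 0 ∧ f = X ^ 2 + C (2 * a) * X + C (2 * a ^ 2) := by
  have h2 : f.coeff 2 = 1 := by
    have := hm.coeff_natDegree
    rwa [hdeg] at this
  set b := f.coeff 1 with hb
  set c := f.coeff 0 with hc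
  have hform : f = X ^ 2 + C b * X + C c := by
    ext n
    match n with
    | 0 => simp [coeff_add, coeff_C, coeff_intCast', hc]
    | 1 => simp [coeff_add, coeff_C, coeff_intCast', hb]
    | 2 => simp [coeff_add, coeff_C, coeff_intCast', h2]
    | (n + 3) =>
      have hlt : f.natDegree < n + 3 := by omega
      simp [coeff_add, coeff_C, coeff_X, coeff_X_pow, coeff_intCast',
        Polynomial.coeff_eq_zero_of_natDegree_lt hlt]
  constructor
  · rintro ⟨α, β, hα, hβ, hcase⟩
    have hβ0 : β ≠ 0 := by
      rintro rfl
      simp [Complex.I_ne_zero] at hcase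
      exact Complex.I_ne_zero hcase.symm
    rw [hform] at hα hβ
    simp only [map_add, map_pow, map_mul, aeval_X, aeval_C] at hα hβ
    have hbc : (b : ℂ) ^ 2 = 2 * (c : ℂ) := by
      rcases hcase with h | h
      · rw [div_eq_iff hβ0] at h
        rw [h] at hα
        exact key_eq hβ0 Complex.I_sq hβ hα
      · rw [div_eq_iff hβ0] at h
        rw [h] at hα
        exact key_eq hβ0 (by rw [neg_pow]; simp [Complex.I_sq]) hβ hα
    have hbcZ : b ^ 2 = 2 * c := by exact_mod_cast hbc
    have hdvd : (2 : ℤ) ∣ b := by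
      have : (2 : ℤ) ∣ b ^ 2 := ⟨c, hbcZ⟩
      exact Int.prime_two.dvd_of_dvd_pow this
    obtain ⟨a, hba⟩ := hdvd
    have hcval : c = 2 * a ^ 2 := by
      have h5 := hbcZ
      rw [hba] at h5
      ring_nf at h5
      linarith
    refine ⟨a, ?_, by rw [hform, hba, hcval]⟩
    rintro rfl
    have hf0 : f = X ^ 2 := by rw [hform, hba, hcval]; simp
    rw [hf0] at hirr
    rw [Polynomial.map_pow, Polynomial.map_X] at hirr
    rcases hirr.isUnit_or_isUnit (sq (X : ℚ[X])) with h | h <;>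
      exact Polynomial.not_isUnit_X h
  · rintro ⟨a, ha, rfl⟩
    refine ⟨-(a : ℂ) + a * Complex.I, -(a : ℂ) - a * Complex.I, ?_, ?_, Or.inr ?_⟩
    · simp only [map_add, map_pow, map_mul, aeval_X, aeval_C]
      simp only [algebraMap_int_eq, eq_intCast]
      push_cast
      linear_combination (a : ℂ) ^ 2 * Complex.I_sq
    · simp only [map_add, map_pow, map_mul, aeval_X, aeval_C]
      simp only [algebraMap_int_eq, eq_intCast]
      push_cast
      linear_combination (a : ℂ) ^ 2 * Complex.I_sq
    · have hβ0 : -(a : ℂ) - a * Complex.I ≠ 0 := by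
        intro h
        have ha' : (a : ℂ) ≠ 0 := by exact_mod_cast ha
        apply ha'
        have := congrArg Complex.re h
        simpa [Complex.ext_iff] using this
      rw [div_eq_iff hβ0]
      linear_combination (-(a : ℂ)) * Complex.I_sq
end

section
/- For every integer H ≥ 1, the number of degenerate reducible polynomials aX^2 + bX + c ∈ ℤ[X] with a ≠ 0 and |a|, |b|, |c| ≤ H equals 2·Σ ⌊√(H/k)⌋², where the sum runs over square-free positive integers k ≤ H. In particular this count is ≫ H log H and ≪ H log H. -/
open Polynomial Finset
open scoped Classical

/-- The number of degenerate reducible quadratics `aX² + bX + c ∈ ℤ[X]` with `a ≠ 0` and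
`|a|, |b|, |c| ≤ H`. -/
noncomputable def R2star (H : ℕ) : ℕ :=
  ((Finset.Icc (-(H : ℤ)) H ×ˢ Finset.Icc (-(H : ℤ)) H ×ˢ Finset.Icc (-(H : ℤ)) H).filter
    fun p => p.1 ≠ 0 ∧
      IsDegenerate (C p.1 * X ^ 2 + C p.2.1 * X + C p.2.2) ∧
      ¬ Irreducible ((C p.1 * X ^ 2 + C p.2.1 * X + C p.2.2 : Polynomial ℤ).map
        (Int.castRingHom ℚ))).card

lemma sf_eq_of_fact_mod {k k' : ℕ} (hk : Squarefree k) (hk' : Squarefree k')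
    (h : ∀ p : ℕ, k.factorization p % 2 = k'.factorization p % 2) : k = k' := by
  have h0 : k ≠ 0 := hk.ne_zero
  have h0' : k' ≠ 0 := hk'.ne_zero
  refine Nat.factorization_inj h0 h0' ?_
  ext p
  have h1 := (Nat.squarefree_iff_factorization_le_one h0).mp hk p
  have h2 := (Nat.squarefree_iff_factorization_le_one h0').mp hk' p
  have := h p
  omega

lemma decomp_inj {k k' m n : ℕ} (hk : Squarefree k) (hk' : Squarefree k')
    (hm : 0 < m) (hn : 0 < n) (h : k * m ^ 2 = k' * n ^ 2) : k = k' ∧ m = n := by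
  have hfact : ∀ p : ℕ, k.factorization p + 2 * m.factorization p
      = k'.factorization p + 2 * n.factorization p := by
    intro p
    have e1 : (k * m ^ 2).factorization p = k.factorization p + 2 * m.factorization p := by
      rw [Nat.factorization_mul hk.ne_zero (pow_ne_zero _ hm.ne'), Nat.factorization_pow]
      simp
    have e2 : (k' * n ^ 2).factorization p = k'.factorization p + 2 * n.factorization p := by
      rw [Nat.factorization_mul hk'.ne_zero (pow_ne_zero _ hn.ne'), Nat.factorization_pow]
      simp
    rw [← e1, ← e2, h]
  have hkk : k = k' := sf_eq_of_fact_mod hk hk' (fun p => by have := hfact p; omega)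
  subst hkk
  have : m ^ 2 = n ^ 2 := Nat.eq_of_mul_eq_mul_left hk.ne_zero.bot_lt h
  exact ⟨rfl, Nat.pow_left_injective two_ne_zero this⟩

lemma sf_eq_of_sq {k k' m n : ℕ} (hk : Squarefree k) (hk' : Squarefree k')
    (hm : 0 < m) (hn : 0 < n) (h : IsSquare (k * m ^ 2 * (k' * n ^ 2))) : k = k' := by
  obtain ⟨s, hs⟩ := h
  have hs0 : s ≠ 0 := by
    rintro rfl
    simp only [mul_zero] at hs
    exact (mul_ne_zero (mul_ne_zero hk.ne_zero (pow_ne_zero _ hm.ne'))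
      (mul_ne_zero hk'.ne_zero (pow_ne_zero _ hn.ne'))) hs
  refine sf_eq_of_fact_mod hk hk' (fun p => ?_)
  have e1 : (k * m ^ 2 * (k' * n ^ 2)).factorization p
      = k.factorization p + 2 * m.factorization p
        + (k'.factorization p + 2 * n.factorization p) := by
    rw [Nat.factorization_mul (mul_ne_zero hk.ne_zero (pow_ne_zero _ hm.ne'))
      (mul_ne_zero hk'.ne_zero (pow_ne_zero _ hn.ne')),
      Nat.factorization_mul hk.ne_zero (pow_ne_zero _ hm.ne'),
      Nat.factorization_mul hk'.ne_zero (pow_ne_zero _ hn.ne'),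
      Nat.factorization_pow, Nat.factorization_pow]
    simp
  have e2 : (s * s).factorization p = 2 * s.factorization p := by
    rw [Nat.factorization_mul hs0 hs0]; simp; ring
  rw [hs] at e1
  rw [e2] at e1
  omega

lemma mem_aux {H k m : ℕ} (hk : 0 < k) :
    m ≤ Nat.sqrt (H / k) ↔ k * m ^ 2 ≤ H := by
  rw [Nat.le_sqrt, Nat.le_div_iff_mul_le hk]
  constructor
  · intro h2; nlinarith
  · intro h2; nlinarith

lemma natcount (H : ℕ) :
    (((Finset.Icc 1 H ×ˢ Finset.Icc 1 H).filter fun p : ℕ × ℕ => IsSquare (p.1 * p.2)).card)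
      = ∑ k ∈ Finset.Icc 1 H, if Squarefree k then (Nat.sqrt (H / k)) ^ 2 else 0 := by
  classical
  rw [← Finset.sum_filter]
  set T := ((Finset.Icc 1 H).filter Squarefree).sigma
      (fun k => Finset.Icc 1 (Nat.sqrt (H / k)) ×ˢ Finset.Icc 1 (Nat.sqrt (H / k))) with hT
  have hcardT : T.card = ∑ k ∈ (Finset.Icc 1 H).filter Squarefree, (Nat.sqrt (H / k)) ^ 2 := by
    rw [Finset.card_sigma]
    refine Finset.sum_congr rfl fun k _ => ?_
    rw [Finset.card_product, Nat.card_Icc, sq]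
    simp
  rw [← hcardT]
  symm
  refine Finset.card_bij (fun x _ => (x.1 * x.2.1 ^ 2, x.1 * x.2.2 ^ 2)) ?_ ?_ ?_
  · rintro ⟨k, m, n⟩ hx
    simp only [hT, Finset.mem_sigma, Finset.mem_filter, Finset.mem_Icc, Finset.mem_product] at hx
    obtain ⟨⟨⟨hk1, hkH⟩, hsf⟩, hm, hn⟩ := hx
    have hk0 : 0 < k := hk1
    have hmH : k * m ^ 2 ≤ H := (mem_aux hk0).mp hm.2
    have hnH : k * n ^ 2 ≤ H := (mem_aux hk0).mp hn.2
    simp only [Finset.mem_filter, Finset.mem_product, Finset.mem_Icc]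
    refine ⟨⟨⟨?_, hmH⟩, ?_, hnH⟩, ?_⟩
    · exact Nat.one_le_iff_ne_zero.mpr (mul_ne_zero hk0.ne' (pow_ne_zero _ (by omega)))
    · exact Nat.one_le_iff_ne_zero.mpr (mul_ne_zero hk0.ne' (pow_ne_zero _ (by omega)))
    · exact ⟨k * m * n, by ring⟩
  · rintro ⟨k, m, n⟩ hx ⟨k', m', n'⟩ hx' heq
    simp only [hT, Finset.mem_sigma, Finset.mem_filter, Finset.mem_Icc, Finset.mem_product] at hx hx'
    obtain ⟨⟨⟨hk1, hkH⟩, hsf⟩, hm, hn⟩ := hx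
    obtain ⟨⟨⟨hk1', hkH'⟩, hsf'⟩, hm', hn'⟩ := hx'
    simp only [Prod.mk.injEq] at heq
    obtain ⟨e1, e2⟩ := heq
    obtain ⟨hkk, hmm⟩ := decomp_inj hsf hsf' (by omega : 0 < m) (by omega : 0 < m') e1
    subst hkk
    have : n ^ 2 = n' ^ 2 := Nat.eq_of_mul_eq_mul_left hk1 e2
    have hnn : n = n' := Nat.pow_left_injective two_ne_zero this
    subst hmm; subst hnn; rfl
  · rintro ⟨a, c⟩ hp
    simp only [Finset.mem_filter, Finset.mem_product, Finset.mem_Icc] at hp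
    obtain ⟨⟨⟨ha1, haH⟩, hc1, hcH⟩, hsq⟩ := hp
    obtain ⟨k, m, hk0, hm0, hkm, hsfk⟩ := Nat.sq_mul_squarefree_of_pos (show 0 < a by omega)
    obtain ⟨k', n, hk0', hn0, hkn, hsfk'⟩ := Nat.sq_mul_squarefree_of_pos (show 0 < c by omega)
    have hkk : k = k' := by
      refine sf_eq_of_sq hsfk hsfk' hm0 hn0 ?_
      have : k * m ^ 2 * (k' * n ^ 2) = a * c := by rw [← hkm, ← hkn]; ring
      rwa [this]
    subst hkk
    refine ⟨⟨k, m, n⟩, ?_, ?_⟩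
    · simp only [hT, Finset.mem_sigma, Finset.mem_filter, Finset.mem_Icc, Finset.mem_product]
      have hm2 : 1 ≤ m ^ 2 := Nat.one_le_pow _ _ hm0
      have hn2 : 1 ≤ n ^ 2 := Nat.one_le_pow _ _ hn0
      have hka : k ≤ a := by nlinarith
      refine ⟨⟨⟨hk0, le_trans hka haH⟩, hsfk⟩, ?_, ?_⟩
      · exact ⟨hm0, (mem_aux hk0).mpr (by rw [mul_comm] at hkm; omega)⟩
      · exact ⟨hn0, (mem_aux hk0).mpr (by rw [mul_comm] at hkn; omega)⟩
    · simp only [Prod.mk.injEq]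
      constructor
      · rw [← hkm]; ring
      · rw [← hkn]; ring

lemma intcount (H : ℕ) :
    ((Finset.Icc (-(H:ℤ)) H ×ˢ Finset.Icc (-(H:ℤ)) H).filter
      fun p : ℤ × ℤ => ∃ s : ℤ, 0 < s ∧ p.1 * p.2 = -s^2).card
    = 2 * (((Finset.Icc 1 H ×ˢ Finset.Icc 1 H).filter
        fun p : ℕ × ℕ => IsSquare (p.1 * p.2)).card) := by
  classical
  set A := (Finset.Icc (-(H:ℤ)) H ×ˢ Finset.Icc (-(H:ℤ)) H).filter
      fun p : ℤ × ℤ => ∃ s : ℤ, 0 < s ∧ p.1 * p.2 = -s^2 with hA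
  have hsplit : (A.filter fun p => 0 < p.1).card + (A.filter fun p => ¬ 0 < p.1).card
      = A.card := Finset.card_filter_add_card_filter_not _
  have hmemA : ∀ p ∈ A, p.1 ≠ 0 ∧ p.2 ≠ 0 ∧ (-(H:ℤ)) ≤ p.1 ∧ p.1 ≤ H ∧ (-(H:ℤ)) ≤ p.2 ∧
      p.2 ≤ H ∧ ∃ s : ℤ, 0 < s ∧ p.1 * p.2 = -s^2 := by
    rintro ⟨a, c⟩ hp
    simp only [hA, Finset.mem_filter, Finset.mem_product, Finset.mem_Icc] at hp
    obtain ⟨⟨⟨h1, h2⟩, h3, h4⟩, s, hs, hsq⟩ := hp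
    have hs2 : a * c ≠ 0 := by rw [hsq]; intro h; nlinarith [sq_nonneg s]
    exact ⟨fun h => hs2 (by rw [show a = 0 from h]; ring),
      fun h => hs2 (by rw [show c = 0 from h]; ring), h1, h2, h3, h4, s, hs, hsq⟩
  -- positive part equals nat count
  have hpos : (A.filter fun p => 0 < p.1).card
      = (((Finset.Icc 1 H ×ˢ Finset.Icc 1 H).filter
        fun p : ℕ × ℕ => IsSquare (p.1 * p.2)).card) := by
    refine Finset.card_bij (fun p _ => (p.1.toNat, (-p.2).toNat)) ?_ ?_ ?_
    · rintro ⟨a, c⟩ hp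
      rw [Finset.mem_filter] at hp
      obtain ⟨hpA, hap⟩ := hp
      obtain ⟨ha0, hc0, h1, h2, h3, h4, s, hs, hsq⟩ := hmemA _ hpA
      have hcneg : c < 0 := by nlinarith [sq_nonneg s]
      simp only [Finset.mem_filter, Finset.mem_product, Finset.mem_Icc]
      refine ⟨⟨⟨by omega, by omega⟩, by omega, by omega⟩, ?_⟩
      refine ⟨s.toNat, ?_⟩
      have : ((a.toNat * (-c).toNat : ℕ) : ℤ) = ((s.toNat * s.toNat : ℕ) : ℤ) := by
        push_cast
        rw [Int.toNat_of_nonneg (by omega : (0:ℤ) ≤ a),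
          Int.toNat_of_nonneg (by omega : (0:ℤ) ≤ -c),
          Int.toNat_of_nonneg (by omega : (0:ℤ) ≤ s)]
        nlinarith
      exact_mod_cast this
    · rintro ⟨a, c⟩ hp ⟨a', c'⟩ hp' heq
      rw [Finset.mem_filter] at hp hp'
      obtain ⟨hpA, hap⟩ := hp
      obtain ⟨hpA', hap'⟩ := hp'
      obtain ⟨ha0, hc0, -, -, -, -, s, hs, hsq⟩ := hmemA _ hpA
      obtain ⟨ha0', hc0', -, -, -, -, s', hs', hsq'⟩ := hmemA _ hpA'
      have hcneg : c < 0 := by nlinarith [sq_nonneg s]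
      have hcneg' : c' < 0 := by nlinarith [sq_nonneg s']
      simp only [Prod.mk.injEq] at heq ⊢
      omega
    · rintro ⟨x, y⟩ hp
      simp only [Finset.mem_filter, Finset.mem_product, Finset.mem_Icc] at hp
      obtain ⟨⟨⟨hx1, hxH⟩, hy1, hyH⟩, r, hr⟩ := hp
      have hr0 : 0 < r := by nlinarith
      refine ⟨((x:ℤ), -(y:ℤ)), ?_, ?_⟩
      · simp only [hA, Finset.mem_filter, Finset.mem_product, Finset.mem_Icc]
        refine ⟨⟨⟨⟨by push_cast; omega, by exact_mod_cast hxH⟩,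
          by push_cast; omega, by push_cast; omega⟩, ?_⟩, by exact_mod_cast hx1⟩
        refine ⟨(r:ℤ), by exact_mod_cast hr0, ?_⟩
        push_cast
        nlinarith [hr]
      · simp only [Prod.mk.injEq]
        constructor <;> omega
  -- negative part equals positive part
  have hneg : (A.filter fun p => ¬ 0 < p.1).card = (A.filter fun p => 0 < p.1).card := by
    refine Finset.card_bij (fun p _ => (-p.1, -p.2)) ?_ ?_ ?_
    · rintro ⟨a, c⟩ hp
      rw [Finset.mem_filter] at hp
      obtain ⟨hpA, hap⟩ := hp
      obtain ⟨ha0, hc0, h1, h2, h3, h4, s, hs, hsq⟩ := hmemA _ hpA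
      simp only [hA, Finset.mem_filter, Finset.mem_product, Finset.mem_Icc]
      exact ⟨⟨⟨⟨by omega, by omega⟩, by omega, by omega⟩,
        ⟨s, hs, by rw [show -a * -c = a * c by ring, hsq]⟩⟩, by omega⟩
    · rintro ⟨a, c⟩ _ ⟨a', c'⟩ _ heq
      simp only [Prod.mk.injEq] at heq ⊢
      omega
    · rintro ⟨a, c⟩ hp
      rw [Finset.mem_filter] at hp
      obtain ⟨hpA, hap⟩ := hp
      obtain ⟨ha0, hc0, h1, h2, h3, h4, s, hs, hsq⟩ := hmemA _ hpA
      refine ⟨(-a, -c), ?_, by simp⟩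
      simp only [hA, Finset.mem_filter, Finset.mem_product, Finset.mem_Icc]
      exact ⟨⟨⟨⟨by omega, by omega⟩, by omega, by omega⟩,
        ⟨s, hs, by rw [show -a * -c = a * c by ring, hsq]⟩⟩, by omega⟩
  omega

lemma eval_quad (a b c : ℤ) (γ : ℂ) :
    Polynomial.aeval γ (C a * X ^ 2 + C b * X + C c)
      = (a:ℂ) * γ ^ 2 + (b:ℂ) * γ + (c:ℂ) := by
  simp

lemma map_quad (a b c : ℤ) :
    ((C a * X ^ 2 + C b * X + C c : Polynomial ℤ).map (Int.castRingHom ℚ))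
      = C (a:ℚ) * X ^ 2 + C (b:ℚ) * X + C (c:ℚ) := by
  simp [Polynomial.map_add, Polynomial.map_mul, Polynomial.map_pow]

lemma forward_aux {a b c : ℤ} {α β : ℂ} {r : ℚ} (ha : a ≠ 0)
    (hsum : (a:ℂ) * (α + β) = -(b:ℂ)) (hprod : (c:ℂ) = (a:ℂ) * α * β) (hne : α ≠ β)
    (hα0 : α ≠ 0) (hβ0 : β ≠ 0) {k : ℕ} (hk : 0 < k) (hu : (α / β) ^ k = 1)
    (hr : (r:ℂ) = α) : b = 0 ∧ ∃ s : ℤ, 0 < s ∧ a * c = -s ^ 2 := by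
  have haC : (a:ℂ) ≠ 0 := by exact_mod_cast ha
  have haQ : (a:ℚ) ≠ 0 := by exact_mod_cast ha
  set r' : ℚ := -(b:ℚ) / (a:ℚ) - r with hr'def
  have hβr : (r':ℂ) = β := by
    have : (r':ℂ) = -(b:ℂ) / (a:ℂ) - (r:ℂ) := by push_cast [hr'def]; ring
    rw [this, hr]
    field_simp
    linear_combination -hsum
  have hrne : r ≠ 0 := by rintro rfl; exact hα0 (by simpa using hr.symm)
  have hr'ne : r' ≠ 0 := by
    intro h
    apply hβ0
    rw [← hβr, h]; simp
  -- the quotient is a rational root of unity, hence -1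
  set q : ℚ := r / r' with hqdef
  have hqC : ((q:ℚ):ℂ) = α / β := by push_cast [hqdef]; rw [hr, hβr]
  have hqk : q ^ k = 1 := by
    have : ((q ^ k : ℚ) : ℂ) = 1 := by push_cast; rw [hqC, hu]
    exact_mod_cast this
  have hq1 : q = 1 ∨ q = -1 ∧ Even k := (pow_eq_one_iff_of_ne_zero hk.ne').mp hqk
  have hqne1 : q ≠ 1 := by
    intro h
    apply hne
    have : α / β = 1 := by rw [← hqC, h]; norm_num
    exact (div_eq_one_iff_eq hβ0).mp this
  have hqm1 : q = -1 := by tauto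
  have hαβ : α = -β := by
    have h : α / β = -1 := by rw [← hqC, hqm1]; norm_num
    rw [div_eq_iff hβ0] at h
    linear_combination h
  have hb0 : (b:ℂ) = 0 := by
    have h := hsum
    rw [hαβ] at h
    simpa using h
  have hb : b = 0 := by exact_mod_cast hb0
  have hβval : β = -(r:ℂ) := by rw [← hr] at hαβ; linear_combination hαβ
  have hcC : (c:ℂ) = -(a:ℂ) * (r:ℂ) ^ 2 := by
    rw [← hr, hβval] at hprod
    linear_combination hprod
  have hcQ : (c:ℚ) = -(a:ℚ) * r ^ 2 := by exact_mod_cast hcC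
  set t : ℚ := (a:ℚ) * r with htdef
  have htne : t ≠ 0 := mul_ne_zero haQ hrne
  have h2 : (a:ℚ) * (c:ℚ) = -t ^ 2 := by rw [htdef, hcQ]; ring
  have hden2 : (t ^ 2).den = 1 := by
    rw [show t ^ 2 = ((-(a*c) : ℤ):ℚ) by push_cast; linear_combination h2]
    exact Rat.den_intCast _
  have hden1 : t.den = 1 := by
    rw [Rat.den_pow] at hden2
    exact (pow_eq_one_iff.mp hden2).resolve_right two_ne_zero
  have htnum : (t.num : ℚ) = t := Rat.coe_int_num_of_den_eq_one hden1
  have htnum0 : t.num ≠ 0 := Rat.num_ne_zero.mpr htne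
  refine ⟨hb, |t.num|, abs_pos.mpr htnum0, ?_⟩
  have h3 : ((a * c : ℤ):ℚ) = ((-t.num ^ 2 : ℤ):ℚ) := by
    push_cast [htnum]
    linear_combination h2
  have h4 : a * c = -t.num ^ 2 := by exact_mod_cast h3
  rw [h4, ← sq_abs]


lemma char (a b c : ℤ) :
    (a ≠ 0 ∧ IsDegenerate (C a * X ^ 2 + C b * X + C c) ∧
      ¬ Irreducible ((C a * X ^ 2 + C b * X + C c : Polynomial ℤ).map (Int.castRingHom ℚ))) ↔
    (b = 0 ∧ ∃ s : ℤ, 0 < s ∧ a * c = -s ^ 2) := by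
  constructor
  · rintro ⟨ha, ⟨α, β, hα, hβ, hne, k, hk, hu⟩, hnirr⟩
    rw [eval_quad] at hα hβ
    have haC : (a:ℂ) ≠ 0 := by exact_mod_cast ha
    have hβ0 : β ≠ 0 := by
      rintro rfl
      rw [div_zero, zero_pow hk.ne'] at hu
      exact zero_ne_one hu
    have hα0 : α ≠ 0 := by
      rintro rfl
      rw [zero_div, zero_pow hk.ne'] at hu
      exact zero_ne_one hu
    have hsum : (a:ℂ) * (α + β) = -(b:ℂ) := by
      have h1 : (α - β) * ((a:ℂ) * (α + β) + (b:ℂ)) = 0 := by linear_combination hα - hβ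
      rcases mul_eq_zero.mp h1 with h | h
      · exact absurd (sub_eq_zero.mp h) hne
      · linear_combination h
    have hprod : (c:ℂ) = (a:ℂ) * α * β := by linear_combination hα - α * hsum
    -- get a rational root
    have hdeg : ((C a * X ^ 2 + C b * X + C c : Polynomial ℤ).map
        (Int.castRingHom ℚ)).natDegree = 2 := by
      rw [map_quad]
      exact natDegree_quadratic (by exact_mod_cast ha)
    have hroots : ((C a * X ^ 2 + C b * X + C c : Polynomial ℤ).map
        (Int.castRingHom ℚ)).roots ≠ 0 := by
      intro h
      exact hnirr ((irreducible_iff_roots_eq_zero_of_degree_le_three (by omega)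
        (by omega)).mpr h)
    obtain ⟨r, hrmem⟩ := Multiset.exists_mem_of_ne_zero hroots
    have hfne : ((C a * X ^ 2 + C b * X + C c : Polynomial ℤ).map
        (Int.castRingHom ℚ)) ≠ 0 := fun h => by rw [h] at hdeg; simp at hdeg
    have hre : (a:ℚ) * r ^ 2 + (b:ℚ) * r + (c:ℚ) = 0 := by
      have := (Polynomial.mem_roots hfne).mp hrmem
      rw [Polynomial.IsRoot, map_quad] at this
      simpa using this
    have hreC : (a:ℂ) * (r:ℂ) ^ 2 + (b:ℂ) * (r:ℂ) + (c:ℂ) = 0 := by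
      have := congrArg (fun t : ℚ => (t:ℂ)) hre
      push_cast at this
      simpa using this
    have hfac : (a:ℂ) * ((r:ℂ) - α) * ((r:ℂ) - β) = 0 := by
      linear_combination hreC - (r:ℂ) * hsum - hprod
    have hrab : (r:ℂ) = α ∨ (r:ℂ) = β := by
      rcases mul_eq_zero.mp hfac with h | h
      · rcases mul_eq_zero.mp h with h' | h'
        · exact absurd h' haC
        · exact Or.inl (sub_eq_zero.mp h')
      · exact Or.inr (sub_eq_zero.mp h)
    rcases hrab with h | h
    · exact forward_aux ha hsum hprod hne hα0 hβ0 hk hu h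
    · refine forward_aux ha (by rw [add_comm]; exact hsum)
        (by rw [hprod]; ring) hne.symm hβ0 hα0 hk ?_ h
      rw [← inv_div, inv_pow, hu, inv_one]
  · rintro ⟨hb, s, hs, hsq⟩
    have ha : a ≠ 0 := by
      rintro rfl
      simp only [zero_mul] at hsq
      nlinarith
    have haC : (a:ℂ) ≠ 0 := by exact_mod_cast ha
    have haQ : (a:ℚ) ≠ 0 := by exact_mod_cast ha
    have hsC : ((s:ℂ))^2 = -((a:ℂ) * (c:ℂ)) := by
      have : ((a * c : ℤ):ℂ) = ((-s^2 : ℤ):ℂ) := by exact_mod_cast hsq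
      push_cast at this
      linear_combination this
    have hsne : (s:ℂ) ≠ 0 := by exact_mod_cast hs.ne'
    refine ⟨ha, ⟨(s:ℂ)/(a:ℂ), -((s:ℂ)/(a:ℂ)), ?_, ?_, ?_, 2, by norm_num, ?_⟩, ?_⟩
    · rw [eval_quad, hb]
      push_cast
      field_simp
      linear_combination hsC
    · rw [eval_quad, hb]
      push_cast
      field_simp
      linear_combination hsC
    · intro h
      apply hsne
      field_simp at h
      norm_num at h
    · rw [div_neg, div_self (div_ne_zero hsne haC)]
      norm_num
    · intro hirr
      have hdeg : ((C a * X ^ 2 + C b * X + C c : Polynomial ℤ).map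
          (Int.castRingHom ℚ)).degree = 2 := by
        rw [map_quad]
        exact degree_quadratic (by exact_mod_cast ha)
      have hroot : Polynomial.IsRoot ((C a * X ^ 2 + C b * X + C c : Polynomial ℤ).map
          (Int.castRingHom ℚ)) ((s:ℚ)/(a:ℚ)) := by
        rw [Polynomial.IsRoot, map_quad]
        have hsQ : ((s:ℚ))^2 = -((a:ℚ) * (c:ℚ)) := by
          have : ((a * c : ℤ):ℚ) = ((-s^2 : ℤ):ℚ) := by exact_mod_cast hsq
          push_cast at this
          linear_combination this
        simp only [Polynomial.eval_add, Polynomial.eval_mul, Polynomial.eval_pow,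
          Polynomial.eval_C, Polynomial.eval_X]
        rw [hb]
        push_cast
        field_simp
        linear_combination hsQ
      have := Polynomial.degree_eq_one_of_irreducible_of_root hirr hroot
      rw [hdeg] at this
      exact absurd this (by norm_num)

lemma tripcount (H : ℕ) :
    ((Finset.Icc (-(H:ℤ)) H ×ˢ Finset.Icc (-(H:ℤ)) H ×ˢ Finset.Icc (-(H:ℤ)) H).filter
      fun p => p.1 ≠ 0 ∧ IsDegenerate (C p.1 * X ^ 2 + C p.2.1 * X + C p.2.2) ∧
        ¬ Irreducible ((C p.1 * X ^ 2 + C p.2.1 * X + C p.2.2 : Polynomial ℤ).map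
          (Int.castRingHom ℚ))).card
    = 2 * ∑ k ∈ Finset.Icc 1 H, if Squarefree k then (Nat.sqrt (H / k)) ^ 2 else 0 := by
  classical
  rw [Finset.filter_congr (fun p _ => (char p.1 p.2.1 p.2.2))]
  rw [← natcount, ← intcount]
  refine Finset.card_bij (fun p _ => (p.1, p.2.2)) ?_ ?_ ?_
  · rintro ⟨a, b, c⟩ hp
    simp only [Finset.mem_filter, Finset.mem_product, Finset.mem_Icc] at hp ⊢
    obtain ⟨⟨⟨h1, h2⟩, ⟨h3, h4⟩, h5, h6⟩, hb, hQ⟩ := hp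
    exact ⟨⟨⟨h1, h2⟩, h5, h6⟩, hQ⟩
  · rintro ⟨a, b, c⟩ hp ⟨a', b', c'⟩ hp' heq
    simp only [Finset.mem_filter] at hp hp'
    simp only [Prod.mk.injEq] at heq ⊢
    exact ⟨heq.1, hp.2.1.trans hp'.2.1.symm, heq.2⟩
  · rintro ⟨a, c⟩ hp
    simp only [Finset.mem_filter, Finset.mem_product, Finset.mem_Icc] at hp
    obtain ⟨⟨⟨h1, h2⟩, h5, h6⟩, hQ⟩ := hp
    refine ⟨(a, 0, c), ?_, rfl⟩
    simp only [Finset.mem_filter, Finset.mem_product, Finset.mem_Icc]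
    have hH0 : (0:ℤ) ≤ (H:ℤ) := by positivity
    exact ⟨⟨⟨h1, h2⟩, ⟨by omega, by omega⟩, h5, h6⟩, trivial, hQ⟩

lemma four_sq_sqrt {n : ℕ} (hn : 1 ≤ n) : n ≤ 4 * Nat.sqrt n ^ 2 := by
  have hs : 1 ≤ Nat.sqrt n := Nat.sqrt_pos.mpr hn
  have h := Nat.lt_succ_sqrt' n
  nlinarith

lemma term_lb {H k : ℕ} (hk : 1 ≤ k) (hkM : 2 * k ≤ H) :
    (H:ℝ) / (8 * k) ≤ ((Nat.sqrt (H / k) : ℝ)) ^ 2 := by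
  have hk0 : 0 < k := hk
  set n := H / k with hn
  have hn2 : 2 ≤ n := (Nat.le_div_iff_mul_le hk0).mpr (by omega)
  have hdm : k * n + H % k = H := by rw [hn]; exact Nat.div_add_mod H k
  have hmlt : H % k < k := Nat.mod_lt H hk0
  have hfour : n ≤ 4 * Nat.sqrt n ^ 2 := four_sq_sqrt (by omega)
  have c1 : (H:ℝ) < (k:ℝ) * n + k := by
    have : H < k * n + k := by omega
    exact_mod_cast this
  have c2 : (n:ℝ) ≤ 4 * ((Nat.sqrt n : ℝ)) ^ 2 := by exact_mod_cast hfour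
  have c3 : (2:ℝ) ≤ (n:ℝ) := by exact_mod_cast hn2
  have ck : (1:ℝ) ≤ (k:ℝ) := by exact_mod_cast hk
  rw [div_le_iff₀ (by positivity)]
  nlinarith [mul_le_mul_of_nonneg_left c2 (by positivity : (0:ℝ) ≤ (k:ℝ)),
    mul_le_mul_of_nonneg_left c3 (by positivity : (0:ℝ) ≤ (k:ℝ)),
    sq_nonneg ((Nat.sqrt n : ℝ)), mul_le_mul_of_nonneg_left c2 (by positivity : (0:ℝ) ≤ (k:ℝ)*(n:ℝ))]

lemma sum_sq_inv_le : ∀ M : ℕ, 1 ≤ M →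
    ∑ m ∈ Finset.Icc 1 M, ((m:ℝ)^2)⁻¹ ≤ 2 - (M:ℝ)⁻¹ := by
  intro M
  induction M with
  | zero => intro h; omega
  | succ M ih =>
    intro _
    rcases Nat.eq_zero_or_pos M with rfl | hM
    · norm_num
    · rw [Finset.sum_Icc_succ_top (by omega : 1 ≤ M + 1)]
      have hMR : (1:ℝ) ≤ (M:ℝ) := by exact_mod_cast hM
      have : (((M:ℝ)+1)^2)⁻¹ ≤ (M:ℝ)⁻¹ - ((M:ℝ)+1)⁻¹ := by
        rw [show (M:ℝ)⁻¹ - ((M:ℝ)+1)⁻¹ = ((M:ℝ)*((M:ℝ)+1))⁻¹ by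
          field_simp; ring]
        apply inv_anti₀ (by positivity)
        nlinarith
      have hih := ih hM
      push_cast
      linarith

lemma sf_harm (M : ℕ) (hM : 1 ≤ M) :
    Real.log (M + 1) ≤ 2 * ∑ k ∈ (Finset.Icc 1 M).filter Squarefree, (k:ℝ)⁻¹ := by
  classical
  have h1 : Real.log (M + 1) ≤ ∑ j ∈ Finset.Icc 1 M, (j:ℝ)⁻¹ := by
    have := log_add_one_le_harmonic M
    rw [harmonic_eq_sum_Icc] at this
    push_cast at this
    exact this
  set T := ((Finset.Icc 1 M).filter Squarefree) ×ˢ Finset.Icc 1 M with hT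
  have hsub : Finset.Icc 1 M ⊆ T.image (fun km : ℕ × ℕ => km.1 * km.2 ^ 2) := by
    intro j hj
    rw [Finset.mem_Icc] at hj
    obtain ⟨k, m, hk0, hm0, hkm, hsf⟩ := Nat.sq_mul_squarefree_of_pos (show 0 < j by omega)
    rw [Finset.mem_image]
    refine ⟨(k, m), ?_, by rw [mul_comm] at hkm; exact hkm⟩
    simp only [hT, Finset.mem_product, Finset.mem_filter, Finset.mem_Icc]
    have hm2 : m ≤ m ^ 2 := by nlinarith
    exact ⟨⟨⟨hk0, by nlinarith⟩, hsf⟩, hm0, by nlinarith⟩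
  have h2 : ∑ j ∈ Finset.Icc 1 M, (j:ℝ)⁻¹
      ≤ ∑ j ∈ T.image (fun km : ℕ × ℕ => km.1 * km.2 ^ 2), (j:ℝ)⁻¹ := by
    apply Finset.sum_le_sum_of_subset_of_nonneg hsub
    intro i _ _
    positivity
  have h3 : ∑ j ∈ T.image (fun km : ℕ × ℕ => km.1 * km.2 ^ 2), (j:ℝ)⁻¹
      = ∑ km ∈ T, ((km.1 * km.2 ^ 2 : ℕ) : ℝ)⁻¹ := by
    apply Finset.sum_image
    rintro ⟨k, m⟩ hkm ⟨k', m'⟩ hkm' heq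
    simp only [hT, Finset.mem_coe, Finset.mem_product, Finset.mem_filter, Finset.mem_Icc] at hkm hkm'
    obtain ⟨hkk, hmm⟩ := decomp_inj hkm.1.2 hkm'.1.2 (by omega) (by omega) heq
    have hmm' : m = m' := by simpa using hmm
    simp [hkk, hmm']
  have h4 : ∑ km ∈ T, ((km.1 * km.2 ^ 2 : ℕ) : ℝ)⁻¹
      ≤ 2 * ∑ k ∈ (Finset.Icc 1 M).filter Squarefree, (k:ℝ)⁻¹ := by
    rw [hT, Finset.sum_product]
    have : ∀ k ∈ (Finset.Icc 1 M).filter Squarefree,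
        ∑ m ∈ Finset.Icc 1 M, ((k * m ^ 2 : ℕ) : ℝ)⁻¹ ≤ (k:ℝ)⁻¹ * 2 := by
      intro k hk
      rw [Finset.mem_filter, Finset.mem_Icc] at hk
      have : ∑ m ∈ Finset.Icc 1 M, ((k * m ^ 2 : ℕ) : ℝ)⁻¹
          = (k:ℝ)⁻¹ * ∑ m ∈ Finset.Icc 1 M, ((m:ℝ)^2)⁻¹ := by
        rw [Finset.mul_sum]
        apply Finset.sum_congr rfl
        intro m _
        push_cast
        rw [mul_inv]
      rw [this]
      have hb := sum_sq_inv_le M hM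
      have hMpos : (0:ℝ) < (M:ℝ)⁻¹ := by
        have : (1:ℝ) ≤ (M:ℝ) := by exact_mod_cast hM
        positivity
      apply mul_le_mul_of_nonneg_left _ (by positivity)
      linarith
    calc ∑ k ∈ (Finset.Icc 1 M).filter Squarefree,
          ∑ m ∈ Finset.Icc 1 M, ((k * m ^ 2 : ℕ) : ℝ)⁻¹
        ≤ ∑ k ∈ (Finset.Icc 1 M).filter Squarefree, (k:ℝ)⁻¹ * 2 :=
          Finset.sum_le_sum this
      _ = 2 * ∑ k ∈ (Finset.Icc 1 M).filter Squarefree, (k:ℝ)⁻¹ := by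
          rw [← Finset.sum_mul]; ring
  linarith


/-- `R2star H = 2·∑_{k ≤ H squarefree} ⌊√(H/k)⌋²`, and `R2star H ≍ H log H`. -/
theorem count_reducible_degenerate_quadratic_star :
    (∀ H : ℕ, 1 ≤ H →
      R2star H = 2 * ∑ k ∈ Finset.Icc 1 H,
        if Squarefree k then (Nat.sqrt (H / k)) ^ 2 else 0) ∧
    ∃ c₁ c₂ : ℝ, 0 < c₁ ∧ 0 < c₂ ∧ ∀ H : ℕ, 2 ≤ H →
      c₁ * (H : ℝ) * Real.log H ≤ (R2star H : ℝ) ∧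
      (R2star H : ℝ) ≤ c₂ * (H : ℝ) * Real.log H := by
  have hform : ∀ H : ℕ, R2star H = 2 * ∑ k ∈ Finset.Icc 1 H,
      if Squarefree k then (Nat.sqrt (H / k)) ^ 2 else 0 := fun H => tripcount H
  refine ⟨fun H _ => hform H, 1/16, 6, by norm_num, by norm_num, fun H hH => ?_⟩
  have hH1 : (1:ℝ) ≤ (H:ℝ) := by exact_mod_cast le_trans one_le_two hH
  have hH2 : (2:ℝ) ≤ (H:ℝ) := by exact_mod_cast hH
  have hlogpos : 0 < Real.log H := Real.log_pos (by linarith)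
  have hcast : (R2star H : ℝ) = 2 * ∑ k ∈ (Finset.Icc 1 H).filter Squarefree,
      ((Nat.sqrt (H / k) : ℝ)) ^ 2 := by
    rw [hform H, ← Finset.sum_filter]
    push_cast
    ring
  constructor
  · -- lower bound
    rcases le_or_gt 4 H with h4 | h4
    · -- H ≥ 4
      set M := H / 2 with hM
      have hM2 : 2 ≤ M := by omega
      have hsub : (Finset.Icc 1 M).filter Squarefree ⊆ (Finset.Icc 1 H).filter Squarefree :=
        Finset.filter_subset_filter _ (Finset.Icc_subset_Icc_right (by omega))
      have h1 : ∑ k ∈ (Finset.Icc 1 M).filter Squarefree, ((Nat.sqrt (H / k) : ℝ)) ^ 2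
          ≤ ∑ k ∈ (Finset.Icc 1 H).filter Squarefree, ((Nat.sqrt (H / k) : ℝ)) ^ 2 :=
        Finset.sum_le_sum_of_subset_of_nonneg hsub (fun i _ _ => by positivity)
      have h2 : ∑ k ∈ (Finset.Icc 1 M).filter Squarefree, (H:ℝ) / (8 * k)
          ≤ ∑ k ∈ (Finset.Icc 1 M).filter Squarefree, ((Nat.sqrt (H / k) : ℝ)) ^ 2 := by
        apply Finset.sum_le_sum
        intro k hk
        rw [Finset.mem_filter, Finset.mem_Icc] at hk
        exact term_lb hk.1.1 (by omega)
      have h3 : ∑ k ∈ (Finset.Icc 1 M).filter Squarefree, (H:ℝ) / (8 * k)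
          = (H:ℝ) / 8 * ∑ k ∈ (Finset.Icc 1 M).filter Squarefree, (k:ℝ)⁻¹ := by
        rw [Finset.mul_sum]
        apply Finset.sum_congr rfl
        intro k _
        field_simp
      have h4' : Real.log (M + 1) ≤ 2 * ∑ k ∈ (Finset.Icc 1 M).filter Squarefree, (k:ℝ)⁻¹ :=
        sf_harm M (by omega)
      have hlogM : Real.log H - Real.log 2 ≤ Real.log (M + 1) := by
        rw [← Real.log_div (by positivity) (by norm_num)]
        apply Real.log_le_log (by positivity)
        have : 2 * M + 2 ≥ H := by omega
        have := (Nat.cast_le (α := ℝ)).mpr this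
        push_cast at this ⊢
        linarith
      have hlog4 : 2 * Real.log 2 ≤ Real.log H := by
        rw [show 2 * Real.log 2 = Real.log 4 by
          rw [show (4:ℝ) = 2^2 by norm_num, Real.log_pow]; push_cast; ring]
        apply Real.log_le_log (by norm_num)
        exact_mod_cast h4
      have hfin : (H:ℝ) * Real.log H / 32 ≤ (H:ℝ) / 8 *
          ∑ k ∈ (Finset.Icc 1 M).filter Squarefree, (k:ℝ)⁻¹ := by
        have hs : Real.log H / 2 ≤ 2 * ∑ k ∈ (Finset.Icc 1 M).filter Squarefree, (k:ℝ)⁻¹ := by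
          have : Real.log H / 2 ≤ Real.log H - Real.log 2 := by linarith
          linarith
        have hHpos : (0:ℝ) < (H:ℝ) := by linarith
        calc (H:ℝ) * Real.log H / 32 = (H:ℝ) / 8 * (Real.log H / 2) / 2 := by ring
          _ ≤ (H:ℝ) / 8 * (2 * ∑ k ∈ (Finset.Icc 1 M).filter Squarefree, (k:ℝ)⁻¹) / 2 := by
              apply div_le_div_of_nonneg_right _ (by norm_num)
              exact mul_le_mul_of_nonneg_left hs (by positivity)
          _ = (H:ℝ) / 8 * ∑ k ∈ (Finset.Icc 1 M).filter Squarefree, (k:ℝ)⁻¹ := by ring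
      rw [hcast]
      calc 1/16 * (H:ℝ) * Real.log H = 2 * ((H:ℝ) * Real.log H / 32) := by ring
        _ ≤ 2 * ((H:ℝ) / 8 * ∑ k ∈ (Finset.Icc 1 M).filter Squarefree, (k:ℝ)⁻¹) := by
            linarith
        _ ≤ 2 * ∑ k ∈ (Finset.Icc 1 H).filter Squarefree, ((Nat.sqrt (H / k) : ℝ)) ^ 2 := by
            rw [← h3] at *
            linarith
    · -- 2 ≤ H < 4
      have hR2 : (2:ℝ) ≤ (R2star H : ℝ) := by
        rw [hcast]
        have h1mem : 1 ∈ (Finset.Icc 1 H).filter Squarefree := by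
          rw [Finset.mem_filter, Finset.mem_Icc]
          exact ⟨⟨le_refl 1, by omega⟩, squarefree_one⟩
        have hterm : (1:ℝ) ≤ ((Nat.sqrt (H / 1) : ℝ)) ^ 2 := by
          have : 1 ≤ Nat.sqrt (H / 1) := Nat.sqrt_pos.mpr (by omega)
          have : (1:ℝ) ≤ ((Nat.sqrt (H / 1) : ℝ)) := by exact_mod_cast this
          nlinarith
        have := Finset.single_le_sum (f := fun k => ((Nat.sqrt (H / k) : ℝ)) ^ 2)
          (fun i _ => by positivity) h1mem
        linarith
      have hlog3 : Real.log H ≤ 2 := by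
        have : Real.log H ≤ (H:ℝ) - 1 := Real.log_le_sub_one_of_pos (by linarith)
        have : (H:ℝ) ≤ 3 := by exact_mod_cast (by omega : H ≤ 3)
        have h2 := Real.log_le_sub_one_of_pos (show (0:ℝ) < H by linarith)
        linarith
      have : 1/16 * (H:ℝ) * Real.log H ≤ 1/16 * 3 * 2 := by
        have h3 : (H:ℝ) ≤ 3 := by exact_mod_cast (by omega : H ≤ 3)
        have := hlogpos.le
        nlinarith
      linarith
  · -- upper bound
    have hup : ∑ k ∈ (Finset.Icc 1 H).filter Squarefree, ((Nat.sqrt (H / k) : ℝ)) ^ 2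
        ≤ ∑ k ∈ Finset.Icc 1 H, (H:ℝ) / k := by
      calc ∑ k ∈ (Finset.Icc 1 H).filter Squarefree, ((Nat.sqrt (H / k) : ℝ)) ^ 2
          ≤ ∑ k ∈ Finset.Icc 1 H, ((Nat.sqrt (H / k) : ℝ)) ^ 2 :=
            Finset.sum_le_sum_of_subset_of_nonneg (Finset.filter_subset _ _)
              (fun i _ _ => by positivity)
        _ ≤ ∑ k ∈ Finset.Icc 1 H, (H:ℝ) / k := by
            apply Finset.sum_le_sum
            intro k hk
            rw [Finset.mem_Icc] at hk
            have hn : Nat.sqrt (H / k) ^ 2 ≤ H / k := by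
              exact Nat.sqrt_le' _
            calc ((Nat.sqrt (H / k) : ℝ)) ^ 2 = ((Nat.sqrt (H / k) ^ 2 : ℕ) : ℝ) := by
                  push_cast; ring
              _ ≤ ((H / k : ℕ) : ℝ) := by exact_mod_cast hn
              _ ≤ (H:ℝ) / k := Nat.cast_div_le
    have hharm : ∑ k ∈ Finset.Icc 1 H, (H:ℝ) / k ≤ (H:ℝ) * (1 + Real.log H) := by
      have h1 : ∑ k ∈ Finset.Icc 1 H, (H:ℝ) / k = (H:ℝ) * ∑ k ∈ Finset.Icc 1 H, (k:ℝ)⁻¹ := by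
        rw [Finset.mul_sum]
        apply Finset.sum_congr rfl
        intro k _
        rw [div_eq_mul_inv]
      have h2 : ∑ k ∈ Finset.Icc 1 H, (k:ℝ)⁻¹ = ((harmonic H : ℚ) : ℝ) := by
        rw [harmonic_eq_sum_Icc]
        push_cast
        ring
      have h3 := harmonic_le_one_add_log H
      rw [h1, h2]
      apply mul_le_mul_of_nonneg_left h3 (by positivity)
    have hlog2 : (1:ℝ) ≤ 2 * Real.log H := by
      have := Real.log_two_gt_d9
      have h2 : Real.log 2 ≤ Real.log H := Real.log_le_log (by norm_num) hH2
      linarith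
    rw [hcast]
    calc 2 * ∑ k ∈ (Finset.Icc 1 H).filter Squarefree, ((Nat.sqrt (H / k) : ℝ)) ^ 2
        ≤ 2 * ((H:ℝ) * (1 + Real.log H)) := by linarith
      _ ≤ 2 * ((H:ℝ) * (3 * Real.log H)) := by nlinarith
      _ = 6 * (H:ℝ) * Real.log H := by ring
end
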